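/- arXiv:2102.02073 — 10 statements merged into one kernel-verified Lean document; each statement's English description precedes it below -/
import Mathlib

section
/- (Lemma 3.1 for m = 2, p ≠ −1) Let n ≥ 1, let p be a real number with p ≠ −1, and let u, v be positive C^2 functions on ℝ^n satisfying v(x) = ∫_0^{u(x)} exp(s^{p+1}/(p+1)) ds for every x ∈ ℝ^n. If Δv(x) ≤ 0 for all x ∈ ℝ^n, then Δu(x) + u(x)^p ‖∇u(x)‖^2 ≤ 0 for all x ∈ ℝ^n. -/
open MeasureTheory Real

/-- The Laplacian of `f : ℝ^n → ℝ`: the sum over the standard basis of the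
second directional derivatives (the trace of the Hessian). -/
noncomputable def euclideanLaplacian {n : ℕ}
    (f : EuclideanSpace ℝ (Fin n) → ℝ) (x : EuclideanSpace ℝ (Fin n)) : ℝ :=
  ∑ i : Fin n,
    fderiv ℝ (fun y => fderiv ℝ f y (EuclideanSpace.single i 1)) x
      (EuclideanSpace.single i 1)

section Aux

variable (p : ℝ)

/-- The integrand. -/
noncomputable def gAux (s : ℝ) : ℝ := Real.exp (s ^ (p + 1) / (p + 1))

lemma gAux_pos (s : ℝ) : 0 < gAux p s := Real.exp_pos _

lemma gAux_measurable : Measurable (gAux p) := by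
  unfold gAux
  measurability

lemma gAux_integrableOn {t : ℝ} (ht : 0 < t) :
    IntegrableOn (gAux p) (Set.Ioo (0 : ℝ) t) := by
  apply Measure.integrableOn_of_bounded
    (M := Real.exp (max (t ^ (p + 1) / (p + 1)) 0))
    (by simp) ((gAux_measurable p).aestronglyMeasurable)
  filter_upwards [ae_restrict_mem measurableSet_Ioo] with s hs
  rw [Real.norm_eq_abs, abs_of_pos (gAux_pos p s)]
  unfold gAux
  apply Real.exp_le_exp.mpr
  rcases lt_or_ge 0 (p + 1) with h | h
  · refine le_trans ?_ (le_max_left _ _)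
    exact (div_le_div_iff_of_pos_right h).mpr (Real.rpow_le_rpow hs.1.le hs.2.le h.le)
  · refine le_trans ?_ (le_max_right _ _)
    exact div_nonpos_iff.mpr (Or.inl ⟨Real.rpow_nonneg hs.1.le _, h⟩)

lemma gAux_continuousAt {t : ℝ} (ht : 0 < t) : ContinuousAt (gAux p) t := by
  unfold gAux
  exact Real.continuous_exp.continuousAt.comp
    ((Real.continuousAt_rpow_const t (p + 1) (Or.inl ht.ne')).div_const _)

lemma hasDerivAt_FAux {t : ℝ} (ht : 0 < t) :
    HasDerivAt (fun r => ∫ s in Set.Ioo (0 : ℝ) r, gAux p s) (gAux p t) t := by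
  have h1 : HasDerivAt (fun r => ∫ s in (0 : ℝ)..r, gAux p s) (gAux p t) t := by
    apply intervalIntegral.integral_hasDerivAt_right
    · rw [intervalIntegrable_iff_integrableOn_Ioo_of_le ht.le]
      exact gAux_integrableOn p ht
    · exact (gAux_measurable p).stronglyMeasurable.stronglyMeasurableAtFilter
    · exact gAux_continuousAt p ht
  refine h1.congr_of_eventuallyEq ?_
  filter_upwards [eventually_gt_nhds ht] with r hr
  rw [intervalIntegral.integral_of_le hr.le, MeasureTheory.integral_Ioc_eq_integral_Ioo]

lemma hasDerivAt_gAux (hp : p + 1 ≠ 0) {t : ℝ} (ht : 0 < t) :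
    HasDerivAt (gAux p) (gAux p t * t ^ p) t := by
  have h0 : HasDerivAt (fun s : ℝ => s ^ (p + 1)) ((p + 1) * t ^ p) t := by
    have := Real.hasDerivAt_rpow_const (x := t) (p := p + 1) (Or.inl ht.ne')
    simpa using this
  have h1 := ((h0.div_const (p + 1)).exp)
  unfold gAux
  convert h1 using 1
  field_simp

end Aux

/-- Lemma 3.1 for `m = 2`, `p ≠ −1`: if `v = ∫_0^u exp(s^{p+1}/(p+1)) ds` is
superharmonic, then `Δu + u^p |∇u|^2 ≤ 0`. -/
theorem change_of_variable_superharmonic (n : ℕ) (hn : 1 ≤ n)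
    (p : ℝ) (hp : p ≠ -1)
    (u v : EuclideanSpace ℝ (Fin n) → ℝ)
    (hu : ContDiff ℝ 2 u) (hv : ContDiff ℝ 2 v)
    (hupos : ∀ x, 0 < u x) (hvpos : ∀ x, 0 < v x)
    (huv : ∀ x, v x = ∫ s in Set.Ioo (0 : ℝ) (u x), Real.exp (s ^ (p + 1) / (p + 1)))
    (hsub : ∀ x, euclideanLaplacian v x ≤ 0) :
    ∀ x, euclideanLaplacian u x + u x ^ p * ‖gradient u x‖ ^ (2 : ℝ) ≤ 0 := by
  intro x
  have hp' : p + 1 ≠ 0 := fun h => hp (by linarith)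
  have hud : ∀ y, HasFDerivAt u (fderiv ℝ u y) y := fun y =>
    ((hu.differentiable (by norm_num)) y).hasFDerivAt
  -- v has derivative g(u y) • Du
  have hvd : ∀ y, HasFDerivAt v ((gAux p (u y)) • fderiv ℝ u y) y := by
    intro y
    have h1 := (hasDerivAt_FAux p (hupos y)).comp_hasFDerivAt y (hud y)
    refine h1.congr_of_eventuallyEq ?_
    exact Filter.Eventually.of_forall fun z => (huv z)
  have hv1 : ∀ y, fderiv ℝ v y = (gAux p (u y)) • fderiv ℝ u y := fun y => (hvd y).fderiv
  -- second derivatives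
  have hD : ContDiff ℝ 1 (fderiv ℝ u) := hu.fderiv_right (by norm_num)
  have key : ∀ i : Fin n,
      fderiv ℝ (fun y => fderiv ℝ v y (EuclideanSpace.single i 1)) x (EuclideanSpace.single i 1)
        = gAux p (u x) *
            fderiv ℝ (fun y => fderiv ℝ u y (EuclideanSpace.single i 1)) x
              (EuclideanSpace.single i 1)
          + gAux p (u x) * (u x) ^ p *
              (fderiv ℝ u x (EuclideanSpace.single i 1)) ^ 2 := by
    intro i
    set e := (EuclideanSpace.single i (1 : ℝ)) with he
    have hG : HasFDerivAt (fun y => gAux p (u y))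
        ((gAux p (u x) * (u x) ^ p) • fderiv ℝ u x) x :=
      (hasDerivAt_gAux p hp' (hupos x)).comp_hasFDerivAt x (hud x)
    have hH : DifferentiableAt ℝ (fun y => fderiv ℝ u y e) x :=
      ((hD.differentiable one_ne_zero) x).clm_apply (differentiableAt_const e)
    have hmul := hG.fun_mul hH.hasFDerivAt
    have heq : (fun y => fderiv ℝ v y e) = fun y => gAux p (u y) * fderiv ℝ u y e := by
      funext y; rw [hv1 y]; simp
    rw [heq, hmul.fderiv]
    simp only [ContinuousLinearMap.add_apply, ContinuousLinearMap.smul_apply, smul_eq_mul]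
    ring
  -- gradient identity
  have hgrad : ∀ y, fderiv ℝ u x y = inner ℝ (gradient u x) y := by
    intro y
    unfold gradient
    rw [← InnerProductSpace.toDual_apply_apply, LinearIsometryEquiv.apply_symm_apply]
  have hnorm : ∑ i : Fin n, (fderiv ℝ u x (EuclideanSpace.single i 1)) ^ 2
      = ‖gradient u x‖ ^ (2 : ℝ) := by
    rw [show ((2 : ℝ)) = ((2 : ℕ) : ℝ) by norm_num, Real.rpow_natCast,
      PiLp.norm_sq_eq_of_L2]
    refine Finset.sum_congr rfl fun i _ => ?_
    rw [hgrad, EuclideanSpace.inner_single_right]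
    simp [Real.norm_eq_abs, sq_abs]
  have hLap : euclideanLaplacian v x
      = gAux p (u x) * (euclideanLaplacian u x + u x ^ p * ‖gradient u x‖ ^ (2 : ℝ)) := by
    unfold euclideanLaplacian
    rw [Finset.sum_congr rfl (fun i _ => key i), Finset.sum_add_distrib,
      ← Finset.mul_sum, ← Finset.mul_sum, hnorm]
    ring
  have h0 := hsub x
  rw [hLap] at h0
  have hg := gAux_pos p (u x)
  by_contra hA
  push_neg at hA
  exact absurd h0 (not_le.mpr (mul_pos hg hA))
end

section
/- (Radial supersolution near infinity, region G_1; Step 1 of the proof of Theorem 1.5 (A)) Let m > 1, p ≥ 0, q < m, p + q > m − 1, set α = (mp+q)/(p+q−m+1), let β > (m−1)/(p+q−m+1), c > 0, and define S(r) = c·r^{α−1}·(ln r)^β for r > 1. Fix η with 0 < η < β − (m−1)/(p+q−m+1) and define u(r) = ∫_r^∞ S(s)^{−1/(m−1)} (ln s)^{η/(m−1)} ds. Then: (i) since (α−1)/(m−1) = (p+1)/(p+q−m+1) > 1, the integral converges for every r > 1, so u is well defined and positive; (ii) u is differentiable with u'(r) = −S(r)^{−1/(m−1)}(ln r)^{η/(m−1)}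 < 0 and S(r)·|u'(r)|^{m−2}·u'(r) = −(ln r)^η; (iii) there exists R₀ > 1 such that for all r ≥ R₀, the radial inequality (S·|u'|^{m−2}·u')'(r) + S(r)·u(r)^p·|u'(r)|^q ≤ 0 holds. -/
open MeasureTheory Real

/-- Radial supersolution near infinity, region `G₁`
(Step 1 of the proof of Theorem 1.5 (A)). -/
theorem radial_supersolution_near_infinity_G1
    (m p q α β c η : ℝ)
    (hm : 1 < m) (hp : 0 ≤ p) (hq : q < m) (hpq : m - 1 < p + q)
    (hα : α = (m * p + q) / (p + q - m + 1))
    (hβ : (m - 1) / (p + q - m + 1) < β) (hc : 0 < c)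
    (hη1 : 0 < η) (hη2 : η < β - (m - 1) / (p + q - m + 1))
    (S u : ℝ → ℝ)
    (hS : ∀ r : ℝ, 1 < r → S r = c * r ^ (α - 1) * Real.log r ^ β)
    (hu : ∀ r : ℝ, 1 < r →
      u r = ∫ s in Set.Ioi r, S s ^ (-(1 / (m - 1))) * Real.log s ^ (η / (m - 1))) :
    -- (i) convergence of the integral and positivity of u
    ((α - 1) / (m - 1) = (p + 1) / (p + q - m + 1) ∧
      1 < (p + 1) / (p + q - m + 1) ∧
      (∀ r : ℝ, 1 < r →
        IntegrableOn (fun s => S s ^ (-(1 / (m - 1))) * Real.log s ^ (η / (m - 1)))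
          (Set.Ioi r) ∧ 0 < u r)) ∧
    -- (ii) derivative of u and the weighted derivative identity
    (∀ r : ℝ, 1 < r →
      HasDerivAt u (-(S r ^ (-(1 / (m - 1))) * Real.log r ^ (η / (m - 1)))) r ∧
      deriv u r < 0 ∧
      S r * |deriv u r| ^ (m - 2) * deriv u r = -(Real.log r ^ η)) ∧
    -- (iii) the radial differential inequality for large r
    (∃ R₀ : ℝ, 1 < R₀ ∧ ∀ r : ℝ, R₀ ≤ r →
      DifferentiableAt ℝ (fun t => S t * |deriv u t| ^ (m - 2) * deriv u t) r ∧
      deriv (fun t => S t * |deriv u t| ^ (m - 2) * deriv u t) r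
        + S r * u r ^ p * |deriv u r| ^ q ≤ 0) := by
  have hm1 : (0:ℝ) < m - 1 := by linarith
  set f : ℝ → ℝ := fun s => S s ^ (-(1 / (m - 1))) * Real.log s ^ (η / (m - 1)) with hfdef
  set d : ℝ := p + q - m + 1 with hd_def
  have hd : 0 < d := by rw [hd_def]; linarith
  set A : ℝ := (p + 1) / d with hA_def
  set B : ℝ := (β - η) / (m - 1) with hB_def
  set C0 : ℝ := c ^ (-(1 / (m - 1))) with hC0_def
  have hC0 : 0 < C0 := Real.rpow_pos_of_pos hc _
  have hA1 : 1 < A := by rw [hA_def, lt_div_iff₀ hd]; linarith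
  have hB : 0 < B := by
    rw [hB_def]
    apply div_pos _ hm1
    have : 0 < (m - 1) / d := div_pos hm1 hd
    linarith
  have hαA : α - 1 = (m - 1) * A := by
    rw [hα, hA_def]; field_simp; ring
  have hkey : (α - 1) / (m - 1) = A := by
    rw [hαA]; field_simp
  -- explicit form of f on (1, ∞)
  have hfg : ∀ s : ℝ, 1 < s → f s = C0 * s ^ (-A) * Real.log s ^ (-B) := by
    intro s hs
    have hs0 : (0:ℝ) < s := lt_trans one_pos hs
    have hls : 0 < Real.log s := Real.log_pos hs
    have h1 : (α - 1) * (-(1 / (m - 1))) = -A := by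
      rw [hαA]; field_simp
    have h2 : β * (-(1 / (m - 1))) + η / (m - 1) = -B := by
      rw [hB_def]; field_simp; ring
    rw [hfdef]
    simp only
    rw [hS s hs,
      Real.mul_rpow (by positivity) (Real.rpow_nonneg hls.le β),
      Real.mul_rpow hc.le (Real.rpow_nonneg hs0.le _),
      ← Real.rpow_mul hs0.le, ← Real.rpow_mul hls.le, h1]
    calc C0 * s ^ (-A) * Real.log s ^ (β * (-(1 / (m - 1)))) * Real.log s ^ (η / (m - 1))
        = C0 * s ^ (-A) * (Real.log s ^ (β * (-(1 / (m - 1)))) * Real.log s ^ (η / (m - 1))) := by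
          ring
      _ = C0 * s ^ (-A) * Real.log s ^ (-B) := by rw [← Real.rpow_add hls, h2]
  have hfpos : ∀ s : ℝ, 1 < s → 0 < f s := by
    intro s hs
    have hs0 : (0:ℝ) < s := lt_trans one_pos hs
    have hls : 0 < Real.log s := Real.log_pos hs
    rw [hfg s hs]
    exact mul_pos (mul_pos hC0 (Real.rpow_pos_of_pos hs0 _)) (Real.rpow_pos_of_pos hls _)
  have hcont : ContinuousOn (fun s : ℝ => C0 * s ^ (-A) * Real.log s ^ (-B)) (Set.Ioi 1) := by
    intro s hs
    have hs1 : (1:ℝ) < s := hs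
    have hs0 : (0:ℝ) < s := lt_trans one_pos hs1
    have hls : 0 < Real.log s := Real.log_pos hs1
    apply ContinuousAt.continuousWithinAt
    apply ContinuousAt.mul
    · exact continuousAt_const.mul (Real.continuousAt_rpow_const s (-A) (Or.inl hs0.ne'))
    · exact (Real.continuousAt_rpow_const (Real.log s) (-B) (Or.inl hls.ne')).comp
        (Real.continuousAt_log hs0.ne')
  have hfle : ∀ r s : ℝ, 1 < r → r < s →
      f s ≤ C0 * Real.log r ^ (-B) * s ^ (-A) := by
    intro r s hr hrs
    have hs1 : (1:ℝ) < s := lt_trans hr hrs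
    have hs0 : (0:ℝ) < s := lt_trans one_pos hs1
    have hLr : 0 < Real.log r := Real.log_pos hr
    rw [hfg s hs1]
    have hlog : Real.log s ^ (-B) ≤ Real.log r ^ (-B) :=
      Real.rpow_le_rpow_of_nonpos hLr (Real.log_le_log (lt_trans one_pos hr) hrs.le)
        (by linarith)
    calc C0 * s ^ (-A) * Real.log s ^ (-B)
        ≤ C0 * s ^ (-A) * Real.log r ^ (-B) := by
          apply mul_le_mul_of_nonneg_left hlog
          positivity
      _ = C0 * Real.log r ^ (-B) * s ^ (-A) := by ring
  have hint : ∀ r : ℝ, 1 < r → IntegrableOn f (Set.Ioi r) := by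
    intro r hr
    have hr0 : (0:ℝ) < r := lt_trans one_pos hr
    have hbig : IntegrableOn (fun s : ℝ => C0 * Real.log r ^ (-B) * s ^ (-A)) (Set.Ioi r) :=
      (integrableOn_Ioi_rpow_of_lt (by linarith) hr0).const_mul _
    have hmeas : AEStronglyMeasurable f (volume.restrict (Set.Ioi r)) := by
      have h1 : AEStronglyMeasurable (fun s : ℝ => C0 * s ^ (-A) * Real.log s ^ (-B))
          (volume.restrict (Set.Ioi r)) :=
        ((hcont.mono (Set.Ioi_subset_Ioi hr.le)).aestronglyMeasurable measurableSet_Ioi)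
      apply h1.congr
      filter_upwards [ae_restrict_mem measurableSet_Ioi] with s hs
      exact (hfg s (lt_trans hr hs)).symm
    apply hbig.mono' hmeas
    filter_upwards [ae_restrict_mem measurableSet_Ioi] with s hs
    rw [Real.norm_eq_abs, abs_of_pos (hfpos s (lt_trans hr hs))]
    exact hfle r s hr hs
  have hupos : ∀ r : ℝ, 1 < r → 0 < u r := by
    intro r hr
    rw [hu r hr]
    have hnn : 0 ≤ᵐ[volume.restrict (Set.Ioi r)] f := by
      filter_upwards [ae_restrict_mem measurableSet_Ioi] with s hs
      exact (hfpos s (lt_trans hr hs)).le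
    rw [setIntegral_pos_iff_support_of_nonneg_ae hnn (hint r hr)]
    have hsub : Set.Ioi r ⊆ Function.support f ∩ Set.Ioi r := fun s hs =>
      ⟨(hfpos s (lt_trans hr hs)).ne', hs⟩
    calc (0 : ENNReal) < volume (Set.Ioi r) := by rw [Real.volume_Ioi]; exact ENNReal.zero_lt_top
      _ ≤ _ := measure_mono hsub
  -- a splitting identity for u
  have hsplit : ∀ x y : ℝ, 1 < x → x ≤ y → u x = (∫ t in x..y, f t) + u y := by
    intro x y hx hxy
    have hy : 1 < y := lt_of_lt_of_le hx hxy
    rw [hu x hx, hu y hy, intervalIntegral.integral_of_le hxy]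
    rw [← setIntegral_union (Set.Ioc_disjoint_Ioi le_rfl) measurableSet_Ioi
      ((hint x hx).mono_set Set.Ioc_subset_Ioi_self) (hint y hy),
      Set.Ioc_union_Ioi_eq_Ioi hxy]
  -- part (ii), stated with f
  have hii : ∀ r : ℝ, 1 < r → HasDerivAt u (-(f r)) r ∧ deriv u r < 0 ∧
      S r * |deriv u r| ^ (m - 2) * deriv u r = -(Real.log r ^ η) := by
    intro r hr
    have hr0 : (0:ℝ) < r := lt_trans one_pos hr
    have hLr : 0 < Real.log r := Real.log_pos hr
    set r₀ : ℝ := (1 + r) / 2 with hr₀_def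
    have hr₀1 : 1 < r₀ := by rw [hr₀_def]; linarith
    have hr₀r : r₀ < r := by rw [hr₀_def]; linarith
    have hrep : ∀ x : ℝ, 1 < x → u x = u r₀ - ∫ t in r₀..x, f t := by
      intro x hx
      rcases le_total r₀ x with h | h
      · have := hsplit r₀ x hr₀1 h
        linarith [this]
      · have := hsplit x r₀ hx h
        rw [intervalIntegral.integral_symm]
        linarith [this]
    have hci : IntervalIntegrable f volume r₀ r := by
      rw [intervalIntegrable_iff]
      apply (hint r₀ hr₀1).mono_set
      rw [Set.uIoc_of_le hr₀r.le]
      exact Set.Ioc_subset_Ioi_self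
    have hmeasf : StronglyMeasurableAtFilter f (nhds r) := by
      refine ⟨Set.Ioi 1, Ioi_mem_nhds hr, ?_⟩
      have h1 : AEStronglyMeasurable (fun s : ℝ => C0 * s ^ (-A) * Real.log s ^ (-B))
          (volume.restrict (Set.Ioi 1)) := hcont.aestronglyMeasurable measurableSet_Ioi
      apply h1.congr
      filter_upwards [ae_restrict_mem measurableSet_Ioi] with s hs
      exact (hfg s hs).symm
    have hcf : ContinuousAt f r := by
      have hg : ContinuousAt (fun s : ℝ => C0 * s ^ (-A) * Real.log s ^ (-B)) r :=
        hcont.continuousAt (Ioi_mem_nhds hr)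
      apply hg.congr
      filter_upwards [Ioi_mem_nhds hr] with s hs
      exact (hfg s hs).symm
    have hderiv_v : HasDerivAt (fun x => u r₀ - ∫ t in r₀..x, f t) (-(f r)) r := by
      simpa using (intervalIntegral.integral_hasDerivAt_right hci hmeasf hcf).const_sub (u r₀)
    have hud : HasDerivAt u (-(f r)) r := by
      apply hderiv_v.congr_of_eventuallyEq
      filter_upwards [Ioi_mem_nhds (show (1:ℝ) < r from hr)] with x hx
      exact hrep x hx
    have hderiv : deriv u r = -(f r) := hud.deriv
    have hfr : 0 < f r := hfpos r hr
    have hSr : 0 < S r := by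
      rw [hS r hr]
      exact mul_pos (mul_pos hc (Real.rpow_pos_of_pos hr0 _)) (Real.rpow_pos_of_pos hLr _)
    refine ⟨hud, by rw [hderiv]; linarith, ?_⟩
    rw [hderiv, abs_neg, abs_of_pos hfr]
    have hfm : f r ^ (m - 2) * f r = f r ^ (m - 1) := by
      nth_rewrite 2 [← Real.rpow_one (f r)]
      rw [← Real.rpow_add hfr, show m - 2 + 1 = m - 1 from by ring]
    have hfm1 : S r * f r ^ (m - 1) = Real.log r ^ η := by
      have hSrw : f r = S r ^ (-(1 / (m - 1))) * Real.log r ^ (η / (m - 1)) := rfl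
      rw [hSrw,
        Real.mul_rpow (Real.rpow_nonneg hSr.le _) (Real.rpow_nonneg hLr.le _),
        ← Real.rpow_mul hSr.le, ← Real.rpow_mul hLr.le,
        show -(1 / (m - 1)) * (m - 1) = (-1 : ℝ) from by field_simp,
        show η / (m - 1) * (m - 1) = η from by field_simp,
        Real.rpow_neg_one]
      field_simp
    calc S r * f r ^ (m - 2) * -(f r) = -(S r * (f r ^ (m - 2) * f r)) := by ring
      _ = -(S r * f r ^ (m - 1)) := by rw [hfm]
      _ = -(Real.log r ^ η) := by rw [hfm1]
  -- upper bound for u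
  set K : ℝ := C0 / (A - 1) with hK_def
  have hK : 0 < K := div_pos hC0 (by linarith)
  have hub : ∀ r : ℝ, 1 < r → u r ≤ K * r ^ (1 - A) * Real.log r ^ (-B) := by
    intro r hr
    have hr0 : (0:ℝ) < r := lt_trans one_pos hr
    have hLr : 0 < Real.log r := Real.log_pos hr
    rw [hu r hr]
    have hbig : IntegrableOn (fun s : ℝ => C0 * Real.log r ^ (-B) * s ^ (-A)) (Set.Ioi r) :=
      (integrableOn_Ioi_rpow_of_lt (by linarith) hr0).const_mul _
    have h1 : (∫ s in Set.Ioi r, f s) ≤ ∫ s in Set.Ioi r, C0 * Real.log r ^ (-B) * s ^ (-A) :=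
      setIntegral_mono_on (hint r hr) hbig measurableSet_Ioi (fun s hs => hfle r s hr hs)
    have h2 : (∫ s in Set.Ioi r, C0 * Real.log r ^ (-B) * s ^ (-A))
        = K * r ^ (1 - A) * Real.log r ^ (-B) := by
      rw [MeasureTheory.integral_const_mul, integral_Ioi_rpow_of_lt (by linarith) hr0]
      have hne1 : (-A + 1 : ℝ) ≠ 0 := (by linarith : (-A + 1 : ℝ) < 0).ne
      have hne2 : (A - 1 : ℝ) ≠ 0 := (by linarith : (0:ℝ) < A - 1).ne'
      have e : -r ^ (-A + 1) / (-A + 1) = r ^ (1 - A) / (A - 1) := by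
        rw [div_eq_div_iff hne1 hne2, show (-A + 1 : ℝ) = 1 - A from by ring]
        ring
      rw [e, hK_def]
      ring
    exact le_trans h1 (le_of_eq h2)
  set M : ℝ := c * K ^ p * C0 ^ q with hM_def
  have hM : 0 < M :=
    mul_pos (mul_pos hc (Real.rpow_pos_of_pos hK _)) (Real.rpow_pos_of_pos hC0 _)
  set E : ℝ := β - B * (p + q) with hE_def
  have hδ : 0 < η - 1 - E := by
    have key : η - 1 - E = ((β - η) * d - (m - 1)) / (m - 1) := by
      rw [hE_def, hB_def, hd_def]; field_simp; ring
    have h1 : (m - 1) / d < β - η := by linarith [hη2]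
    have h2 : m - 1 < (β - η) * d := by rwa [div_lt_iff₀ hd] at h1
    rw [key]
    exact div_pos (by linarith) hm1
  have hexp1 : (m - 1) * A + (1 - A) * p + -A * q = -1 := by
    have hAd : A * d = p + 1 := by rw [hA_def]; field_simp
    rw [hd_def] at hAd
    linear_combination -hAd
  refine ⟨⟨hkey, hA1, fun r hr => ⟨hint r hr, hupos r hr⟩⟩, fun r hr => hii r hr, ?_⟩
  -- part (iii)
  refine ⟨max 2 (Real.exp (max 1 ((M / η) ^ (η - 1 - E)⁻¹))),
    lt_max_iff.mpr (Or.inl one_lt_two), ?_⟩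
  intro r hrR
  have hr2 : (2:ℝ) ≤ r := le_trans (le_max_left _ _) hrR
  have hr : (1:ℝ) < r := by linarith
  have hr0 : (0:ℝ) < r := by linarith
  have hLr : 0 < Real.log r := Real.log_pos hr
  have hTlog : max 1 ((M / η) ^ (η - 1 - E)⁻¹) ≤ Real.log r := by
    rw [← Real.log_exp (max 1 ((M / η) ^ (η - 1 - E)⁻¹))]
    exact Real.log_le_log (Real.exp_pos _) (le_trans (le_max_right _ _) hrR)
  have hwEq : (fun t => S t * |deriv u t| ^ (m - 2) * deriv u t)
      =ᶠ[nhds r] (fun t => -(Real.log t ^ η)) := by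
    filter_upwards [Ioi_mem_nhds hr] with t ht
    exact (hii t ht).2.2
  have hdlog : HasDerivAt (fun t => -(Real.log t ^ η))
      (-(r⁻¹ * η * Real.log r ^ (η - 1))) r :=
    ((Real.hasDerivAt_log hr0.ne').rpow_const (Or.inl hLr.ne')).neg
  have hdw : HasDerivAt (fun t => S t * |deriv u t| ^ (m - 2) * deriv u t)
      (-(r⁻¹ * η * Real.log r ^ (η - 1))) r := hdlog.congr_of_eventuallyEq hwEq
  refine ⟨hdw.differentiableAt, ?_⟩
  rw [hdw.deriv]
  have habs : |deriv u r| = f r := by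
    rw [(hii r hr).1.deriv, abs_neg, abs_of_pos (hfpos r hr)]
  -- the main estimate
  have step1 : S r * u r ^ p * |deriv u r| ^ q ≤ M * r ^ (-1 : ℝ) * Real.log r ^ E := by
    rw [habs, hfg r hr, hS r hr]
    have hup : u r ^ p ≤ (K * r ^ (1 - A) * Real.log r ^ (-B)) ^ p :=
      Real.rpow_le_rpow (hupos r hr).le (hub r hr) hp
    have heq : c * r ^ (α - 1) * Real.log r ^ β * (K * r ^ (1 - A) * Real.log r ^ (-B)) ^ p *
        (C0 * r ^ (-A) * Real.log r ^ (-B)) ^ q = M * r ^ (-1 : ℝ) * Real.log r ^ E := by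
      rw [Real.mul_rpow (by positivity) (Real.rpow_nonneg hLr.le (-B)),
        Real.mul_rpow hK.le (Real.rpow_nonneg hr0.le (1 - A)),
        Real.mul_rpow (by positivity) (Real.rpow_nonneg hLr.le (-B)),
        Real.mul_rpow hC0.le (Real.rpow_nonneg hr0.le (-A)),
        ← Real.rpow_mul hr0.le, ← Real.rpow_mul hLr.le,
        ← Real.rpow_mul hr0.le, ← Real.rpow_mul hLr.le, hαA]
      calc c * r ^ ((m - 1) * A) * Real.log r ^ β *
            (K ^ p * r ^ ((1 - A) * p) * Real.log r ^ (-B * p)) *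
            (C0 ^ q * r ^ (-A * q) * Real.log r ^ (-B * q))
          = (c * K ^ p * C0 ^ q) * (r ^ ((m - 1) * A) * r ^ ((1 - A) * p) * r ^ (-A * q)) *
            (Real.log r ^ β * Real.log r ^ (-B * p) * Real.log r ^ (-B * q)) := by ring
        _ = M * r ^ ((m - 1) * A + (1 - A) * p + -A * q) *
            Real.log r ^ (β + -B * p + -B * q) := by
            rw [← Real.rpow_add hr0, ← Real.rpow_add hr0, ← Real.rpow_add hLr,
              ← Real.rpow_add hLr, hM_def]
        _ = M * r ^ (-1 : ℝ) * Real.log r ^ E := by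
            rw [hexp1, hE_def, show β + -B * p + -B * q = β - B * (p + q) from by ring]
    calc c * r ^ (α - 1) * Real.log r ^ β * u r ^ p * (C0 * r ^ (-A) * Real.log r ^ (-B)) ^ q
        ≤ c * r ^ (α - 1) * Real.log r ^ β * (K * r ^ (1 - A) * Real.log r ^ (-B)) ^ p *
          (C0 * r ^ (-A) * Real.log r ^ (-B)) ^ q := by
          apply mul_le_mul_of_nonneg_right
            (mul_le_mul_of_nonneg_left hup (by positivity)) (by positivity)
      _ = M * r ^ (-1 : ℝ) * Real.log r ^ E := heq
  have step2 : M * Real.log r ^ E ≤ η * Real.log r ^ (η - 1) := by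
    have hMη : M / η ≤ Real.log r ^ (η - 1 - E) := by
      calc M / η = ((M / η) ^ (η - 1 - E)⁻¹) ^ (η - 1 - E) :=
            (Real.rpow_inv_rpow (by positivity) hδ.ne').symm
        _ ≤ Real.log r ^ (η - 1 - E) :=
            Real.rpow_le_rpow (by positivity) (le_trans (le_max_right _ _) hTlog) hδ.le
    have hM2 : M ≤ η * Real.log r ^ (η - 1 - E) := by
      rw [div_le_iff₀ hη1] at hMη
      linarith [hMη]
    calc M * Real.log r ^ E ≤ (η * Real.log r ^ (η - 1 - E)) * Real.log r ^ E :=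
          mul_le_mul_of_nonneg_right hM2 (Real.rpow_nonneg hLr.le _)
      _ = η * Real.log r ^ (η - 1) := by
          rw [mul_assoc, ← Real.rpow_add hLr, show η - 1 - E + E = η - 1 from by ring]
  have hchain : S r * u r ^ p * |deriv u r| ^ q ≤ r⁻¹ * η * Real.log r ^ (η - 1) :=
    calc S r * u r ^ p * |deriv u r| ^ q ≤ M * r ^ (-1 : ℝ) * Real.log r ^ E := step1
      _ = (M * Real.log r ^ E) * r⁻¹ := by rw [Real.rpow_neg_one]; ring
      _ ≤ (η * Real.log r ^ (η - 1)) * r⁻¹ :=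
          mul_le_mul_of_nonneg_right step2 (inv_nonneg.mpr hr0.le)
      _ = r⁻¹ * η * Real.log r ^ (η - 1) := by ring
  linarith [hchain]
end

section
/- (Radial supersolution near infinity, region G_2 with q > m; Step 1 of the proof of Theorem 1.5 (B)) Let m > 1, q > m, p ∈ ℝ, β > m − 1, c > 0, and define S(r) = c·r^{m−1}·(ln r)^β for r > 1. Fix η with 0 < η < β − (m − 1) and define u(r) = (ln r)^{−η/(m−1)}. Then there exists R₀ > 1 such that for all r ≥ R₀, u'(r) < 0 and the radial inequality (S·|u'|^{m−2}·u')'(r) + S(r)·u(r)^p·|u'(r)|^q ≤ 0 holds. -/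
open MeasureTheory Real

open Filter

/-- Radial supersolution near infinity, region `G₂` with `q > m`
(Step 1 of the proof of Theorem 1.5 (B)). -/
theorem radial_supersolution_near_infinity_G2
    (m p q β c η : ℝ)
    (hm : 1 < m) (hq : m < q) (hβ : m - 1 < β) (hc : 0 < c)
    (hη1 : 0 < η) (hη2 : η < β - (m - 1))
    (S u : ℝ → ℝ)
    (hS : ∀ r : ℝ, 1 < r → S r = c * r ^ (m - 1) * Real.log r ^ β)
    (hu : ∀ r : ℝ, 1 < r → u r = Real.log r ^ (-(η / (m - 1)))) :
    ∃ R₀ : ℝ, 1 < R₀ ∧ ∀ r : ℝ, R₀ ≤ r →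
      deriv u r < 0 ∧
      DifferentiableAt ℝ (fun t => S t * |deriv u t| ^ (m - 2) * deriv u t) r ∧
      deriv (fun t => S t * |deriv u t| ^ (m - 2) * deriv u t) r
        + S r * u r ^ p * |deriv u r| ^ q ≤ 0 := by
  have hm1 : (0:ℝ) < m - 1 := by linarith
  set k : ℝ := η / (m - 1) with hkdef
  have hk : 0 < k := div_pos hη1 hm1
  have hkη : k * (m - 1) = η := div_mul_cancel₀ η hm1.ne'
  set α : ℝ := β - (m - 1) - η with hαdef
  have hα : 0 < α := by rw [hαdef]; linarith
  set δ : ℝ := β - k * p + (-k - 1) * q - α + 1 with hδdef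
  -- derivative of u
  have hud : ∀ t : ℝ, 1 < t →
      HasDerivAt u (-(k * Real.log t ^ (-k - 1) * t⁻¹)) t := by
    intro t ht
    have ht0 : (0:ℝ) < t := lt_trans one_pos ht
    have hL : 0 < Real.log t := Real.log_pos ht
    have h1 : HasDerivAt Real.log t⁻¹ t := Real.hasDerivAt_log ht0.ne'
    have h2 : HasDerivAt (fun y : ℝ => y ^ (-k)) ((-k) * Real.log t ^ (-k - 1)) (Real.log t) := by
      exact Real.hasDerivAt_rpow_const (Or.inl hL.ne')
    have h3 := h2.comp t h1
    have heq : (fun s : ℝ => Real.log s ^ (-k)) =ᶠ[nhds t] u := by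
      filter_upwards [eventually_gt_nhds ht] with s hs
      rw [hu s hs]
    have h4 : HasDerivAt u ((-k) * Real.log t ^ (-k - 1) * t⁻¹) t :=
      h3.congr_of_eventuallyEq heq.symm
    convert h4 using 1; ring
  have hD : ∀ t : ℝ, 1 < t → deriv u t = -(k * Real.log t ^ (-k - 1) * t⁻¹) :=
    fun t ht => (hud t ht).deriv
  have hDpos : ∀ t : ℝ, 1 < t → 0 < k * Real.log t ^ (-k - 1) * t⁻¹ := by
    intro t ht
    have ht0 : (0:ℝ) < t := lt_trans one_pos ht
    have hL : 0 < Real.log t := Real.log_pos ht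
    positivity
  have habs : ∀ t : ℝ, 1 < t → |deriv u t| = k * Real.log t ^ (-k - 1) * t⁻¹ := by
    intro t ht
    rw [hD t ht, abs_neg, abs_of_pos (hDpos t ht)]
  -- key identity: S * |u'|^(m-2) * u' = -(c k^(m-1)) * (log t)^α
  have hFG : ∀ t : ℝ, 1 < t →
      S t * |deriv u t| ^ (m - 2) * deriv u t = -(c * k ^ (m - 1)) * Real.log t ^ α := by
    intro t ht
    have ht0 : (0:ℝ) < t := lt_trans one_pos ht
    have hL : 0 < Real.log t := Real.log_pos ht
    have hX : 0 < k * Real.log t ^ (-k - 1) * t⁻¹ := hDpos t ht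
    rw [hS t ht, habs t ht, hD t ht]
    have key : c * t ^ (m - 1) * Real.log t ^ β * ((k * Real.log t ^ (-k - 1) * t⁻¹) ^ (m - 2)
        * (k * Real.log t ^ (-k - 1) * t⁻¹)) = c * k ^ (m - 1) * Real.log t ^ α := by
      rw [← Real.rpow_add_one hX.ne', show m - 2 + 1 = m - 1 by ring,
        Real.rpow_def_of_pos hX,
        Real.log_mul (by positivity) (by positivity), Real.log_mul hk.ne' (by positivity),
        Real.log_inv, Real.log_rpow hL,
        Real.rpow_def_of_pos ht0, Real.rpow_def_of_pos hL, Real.rpow_def_of_pos hL,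
        Real.rpow_def_of_pos hk]
      simp only [mul_assoc, ← Real.exp_add]
      congr 1
      rw [Real.exp_eq_exp]
      linear_combination (-(Real.log (Real.log t))) * hkη + (-(Real.log (Real.log t))) * hαdef
    linear_combination (-1 : ℝ) * key
  -- identity for the nonlinear term
  have hBW : ∀ t : ℝ, 1 < t →
      S t * u t ^ p * |deriv u t| ^ q
        = (c * k ^ (m - 1) * Real.log t ^ (α - 1) * t⁻¹)
          * (k ^ (q - (m - 1)) * (t ^ (m - q) * Real.log t ^ δ)) := by
    intro t ht
    have ht0 : (0:ℝ) < t := lt_trans one_pos ht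
    have hL : 0 < Real.log t := Real.log_pos ht
    have hX : 0 < k * Real.log t ^ (-k - 1) * t⁻¹ := hDpos t ht
    have hLk : 0 < Real.log t ^ (-k) := by positivity
    rw [hS t ht, habs t ht, hu t ht, show -(η / (m - 1)) = -k from rfl,
      Real.rpow_def_of_pos hLk, Real.log_rpow hL,
      Real.rpow_def_of_pos hX,
      Real.log_mul (by positivity) (by positivity), Real.log_mul hk.ne' (by positivity),
      Real.log_inv, Real.log_rpow hL,
      Real.rpow_def_of_pos ht0, Real.rpow_def_of_pos ht0, Real.rpow_def_of_pos hL,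
      Real.rpow_def_of_pos hL, Real.rpow_def_of_pos hL,
      Real.rpow_def_of_pos hk, Real.rpow_def_of_pos hk,
      show t⁻¹ = Real.exp (-Real.log t) by rw [Real.exp_neg, Real.exp_log ht0]]
    simp only [mul_assoc, ← Real.exp_add]
    congr 1
    rw [Real.exp_eq_exp]
    linear_combination (Real.log (Real.log t)) * hδdef
  -- derivative of the comparison function
  have hGd : ∀ t : ℝ, 1 < t →
      HasDerivAt (fun s => -(c * k ^ (m - 1)) * Real.log s ^ α)
        (-(c * k ^ (m - 1)) * (α * Real.log t ^ (α - 1) * t⁻¹)) t := by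
    intro t ht
    have ht0 : (0:ℝ) < t := lt_trans one_pos ht
    have hL : 0 < Real.log t := Real.log_pos ht
    have h1 : HasDerivAt Real.log t⁻¹ t := Real.hasDerivAt_log ht0.ne'
    have h2 : HasDerivAt (fun y : ℝ => y ^ α) (α * Real.log t ^ (α - 1)) (Real.log t) :=
      Real.hasDerivAt_rpow_const (Or.inl hL.ne')
    have h3 := (h2.comp t h1).const_mul (-(c * k ^ (m - 1)))
    exact h3
  -- asymptotics
  have hW : Tendsto (fun x : ℝ => k ^ (q - (m - 1)) * (x ^ (m - q) * Real.log x ^ δ))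
      atTop (nhds 0) := by
    have h1 : Tendsto (fun x : ℝ => Real.log x ^ δ / x ^ (q - m)) atTop (nhds 0) :=
      (isLittleO_log_rpow_rpow_atTop δ (by linarith)).tendsto_div_nhds_zero
    have h2 : (fun x : ℝ => x ^ (m - q) * Real.log x ^ δ)
        =ᶠ[atTop] fun x => Real.log x ^ δ / x ^ (q - m) := by
      filter_upwards [eventually_gt_atTop (0:ℝ)] with x hx
      rw [show m - q = -(q - m) by ring, Real.rpow_neg hx.le, div_eq_mul_inv, mul_comm]
    simpa using (h1.congr' h2.symm).const_mul (k ^ (q - (m - 1)))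
  have hev : ∀ᶠ x in atTop,
      k ^ (q - (m - 1)) * (x ^ (m - q) * Real.log x ^ δ) < α := hW.eventually_lt_const hα
  obtain ⟨N, hN⟩ := hev.exists_forall_of_atTop
  refine ⟨max N 2, lt_of_lt_of_le one_lt_two (le_max_right _ _), fun r hr => ?_⟩
  have hr1 : 1 < r := lt_of_lt_of_le (lt_of_lt_of_le one_lt_two (le_max_right _ _)) hr
  have hrN : N ≤ r := le_trans (le_max_left _ _) hr
  have hr0 : (0:ℝ) < r := lt_trans one_pos hr1
  have hL : 0 < Real.log r := Real.log_pos hr1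
  -- the function F agrees with G near r
  have hFGev : (fun t => S t * |deriv u t| ^ (m - 2) * deriv u t)
      =ᶠ[nhds r] fun s => -(c * k ^ (m - 1)) * Real.log s ^ α := by
    filter_upwards [eventually_gt_nhds hr1] with s hs
    exact hFG s hs
  have hFd : HasDerivAt (fun t => S t * |deriv u t| ^ (m - 2) * deriv u t)
      (-(c * k ^ (m - 1)) * (α * Real.log r ^ (α - 1) * r⁻¹)) r :=
    (hGd r hr1).congr_of_eventuallyEq hFGev
  refine ⟨?_, hFd.differentiableAt, ?_⟩
  · rw [hD r hr1]
    exact neg_lt_zero.mpr (hDpos r hr1)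
  · rw [hFd.deriv, hBW r hr1]
    have hpos : 0 < c * k ^ (m - 1) * Real.log r ^ (α - 1) * r⁻¹ := by positivity
    have h1 := mul_le_mul_of_nonneg_left (le_of_lt (hN r hrN)) hpos.le
    nlinarith [h1]
end

section
/- (Radial supersolution near the origin; Step 2 of the proof of Theorem 1.5 (A)) Let m > 1, p ≥ 0, q ∈ ℝ, and let θ > 0 satisfy θ·(m − 1 − q) < 1. Let ρ > 0 and let S be a differentiable function on (0, ρ) with S > 0 and S' ≥ 0 there. Set A = (∫_0^ρ (1 − e^{−x/ρ})^θ dx)^{−1} and u(r) = A·∫_r^ρ (1 − e^{−x/ρ})^θ dx for r ∈ [0, ρ], so that u(0) = 1 and 0 ≤ u ≤ 1. Then for every λ with 0 < λ ≤ e^{−1}·θ·(m−1)·A^{m−1−q}·(1 − e^{−1})^{θ(m−1−q)−1}/ρ, the radial inequality (S·|u'|^{m−2}·u')'(r) + λ·S(r)·u(r)^p·|u'(r)|^q ≤ 0 holds for all r ∈ (0, ρ). -/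
open MeasureTheory Real

/-- Radial supersolution near the origin
(Step 2 of the proof of Theorem 1.5 (A)). -/
theorem radial_supersolution_near_origin_G1
    (m p q θ ρ A : ℝ)
    (hm : 1 < m) (hp : 0 ≤ p) (hθ : 0 < θ) (hθq : θ * (m - 1 - q) < 1)
    (hρ : 0 < ρ)
    (S u : ℝ → ℝ)
    (hS : ∀ r ∈ Set.Ioo (0 : ℝ) ρ,
      0 < S r ∧ DifferentiableAt ℝ S r ∧ 0 ≤ deriv S r)
    (hA : A = (∫ x in Set.Ioo (0 : ℝ) ρ, (1 - Real.exp (-x / ρ)) ^ θ)⁻¹)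
    (hu : ∀ r ∈ Set.Icc (0 : ℝ) ρ,
      u r = A * ∫ x in Set.Ioo r ρ, (1 - Real.exp (-x / ρ)) ^ θ) :
    u 0 = 1 ∧ (∀ r ∈ Set.Icc (0 : ℝ) ρ, 0 ≤ u r ∧ u r ≤ 1) ∧
    ∀ l : ℝ, 0 < l →
      l ≤ Real.exp (-1) * θ * (m - 1) * A ^ (m - 1 - q)
          * (1 - Real.exp (-1)) ^ (θ * (m - 1 - q) - 1) / ρ →
      ∀ r ∈ Set.Ioo (0 : ℝ) ρ,
        DifferentiableAt ℝ (fun t => S t * |deriv u t| ^ (m - 2) * deriv u t) r ∧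
        deriv (fun t => S t * |deriv u t| ^ (m - 2) * deriv u t) r
          + l * S r * u r ^ p * |deriv u r| ^ q ≤ 0 := by
  set g : ℝ → ℝ := fun x => (1 - Real.exp (-x / ρ)) ^ θ with hgdef
  have hbnonneg : ∀ x : ℝ, 0 ≤ x → 0 ≤ 1 - Real.exp (-x / ρ) := by
    intro x hx
    have h1 : -x / ρ ≤ 0 := by
      rw [neg_div]
      simp [div_nonneg hx hρ.le]
    have := Real.exp_le_one_iff.mpr h1
    linarith
  have hbposx : ∀ x ∈ Set.Ioo (0 : ℝ) ρ, 0 < 1 - Real.exp (-x / ρ) := by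
    intro x hx
    have h1 : -x / ρ < 0 := by
      rw [neg_div, neg_lt_zero]
      exact div_pos hx.1 hρ
    have := Real.exp_lt_one_iff.mpr h1
    linarith
  have hgnonneg : ∀ x : ℝ, 0 ≤ x → 0 ≤ g x := fun x hx =>
    Real.rpow_nonneg (hbnonneg x hx) θ
  have hgpos : ∀ x ∈ Set.Ioo (0 : ℝ) ρ, 0 < g x := fun x hx =>
    Real.rpow_pos_of_pos (hbposx x hx) θ
  have hgcont : ContinuousOn g (Set.Icc 0 ρ) := by
    apply ContinuousOn.rpow_const
    · fun_prop
    · exact fun x _ => Or.inr hθ.le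
  have hgint : IntegrableOn g (Set.Ioo 0 ρ) :=
    (hgcont.integrableOn_compact isCompact_Icc).mono_set Set.Ioo_subset_Icc_self
  have hIeq : (∫ x in Set.Ioo (0:ℝ) ρ, g x) = ∫ x in (0:ℝ)..ρ, g x := by
    rw [intervalIntegral.integral_of_le hρ.le, MeasureTheory.integral_Ioc_eq_integral_Ioo]
  have hIpos : 0 < ∫ x in Set.Ioo (0:ℝ) ρ, g x := by
    rw [hIeq]
    apply intervalIntegral.intervalIntegral_pos_of_pos_on
    · apply ContinuousOn.intervalIntegrable
      rwa [Set.uIcc_of_le hρ.le]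
    · exact hgpos
    · exact hρ
  have hApos : 0 < A := by rw [hA]; exact inv_pos.2 hIpos
  have hu0 : u 0 = 1 := by
    rw [hu 0 ⟨le_refl 0, hρ.le⟩, hA]
    exact inv_mul_cancel₀ hIpos.ne'
  have hbounds : ∀ r ∈ Set.Icc (0:ℝ) ρ, 0 ≤ u r ∧ u r ≤ 1 := by
    intro r hr
    have hint0 : 0 ≤ ∫ x in Set.Ioo r ρ, g x :=
      setIntegral_nonneg measurableSet_Ioo fun x hx => hgnonneg x (le_trans hr.1 hx.1.le)
    have hle : (∫ x in Set.Ioo r ρ, g x) ≤ ∫ x in Set.Ioo (0:ℝ) ρ, g x := by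
      apply setIntegral_mono_set hgint
      · filter_upwards [ae_restrict_mem measurableSet_Ioo] with x hx using hgnonneg x hx.1.le
      · exact HasSubset.Subset.eventuallyLE (Set.Ioo_subset_Ioo hr.1 le_rfl)
    constructor
    · rw [hu r hr]; exact mul_nonneg hApos.le hint0
    · rw [hu r hr]
      calc A * ∫ x in Set.Ioo r ρ, g x
          ≤ A * ∫ x in Set.Ioo (0:ℝ) ρ, g x := mul_le_mul_of_nonneg_left hle hApos.le
        _ = 1 := by rw [hA]; exact inv_mul_cancel₀ hIpos.ne'
  refine ⟨hu0, hbounds, ?_⟩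
  intro l hl hlle r hr
  have hderivu : ∀ t ∈ Set.Ioo (0:ℝ) ρ, HasDerivAt u (-(A * g t)) t := by
    intro t ht
    have hmem : Set.Ioo (0:ℝ) ρ ∈ nhds t := isOpen_Ioo.mem_nhds ht
    have hEq : (fun s => A * ∫ x in s..ρ, g x) =ᶠ[nhds t] u := by
      filter_upwards [hmem] with s hs
      rw [hu s ⟨hs.1.le, hs.2.le⟩, intervalIntegral.integral_of_le hs.2.le,
        MeasureTheory.integral_Ioc_eq_integral_Ioo]
    have hcontb : ∀ x ∈ Set.Ioo (0:ℝ) ρ, ContinuousAt g x := by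
      intro x hx
      have hc : ContinuousAt (fun x : ℝ => 1 - Real.exp (-x / ρ)) x := by fun_prop
      exact hc.rpow_const (Or.inl (hbposx x hx).ne')
    have hii : IntervalIntegrable g volume t ρ := by
      apply ContinuousOn.intervalIntegrable
      rw [Set.uIcc_of_le ht.2.le]
      exact hgcont.mono (Set.Icc_subset_Icc ht.1.le le_rfl)
    have hmeas : StronglyMeasurableAtFilter g (nhds t) :=
      ContinuousAt.stronglyMeasurableAtFilter isOpen_Ioo hcontb t ht
    have hD : HasDerivAt (fun s => ∫ x in s..ρ, g x) (-g t) t :=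
      intervalIntegral.integral_hasDerivAt_left hii hmeas (hcontb t ht)
    have hD2 : HasDerivAt (fun s => A * ∫ x in s..ρ, g x) (-(A * g t)) t := by
      have := hD.const_mul A
      simpa [mul_neg] using this
    exact hD2.congr_of_eventuallyEq hEq.symm
  have hderivu' : ∀ t ∈ Set.Ioo (0:ℝ) ρ, deriv u t = -(A * g t) :=
    fun t ht => (hderivu t ht).deriv
  set b : ℝ := 1 - Real.exp (-r / ρ) with hbdef
  have hbr : 0 < b := hbposx r hr
  have hAg : ∀ t ∈ Set.Ioo (0:ℝ) ρ, 0 < A * g t := fun t ht => mul_pos hApos (hgpos t ht)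
  have hAgr : 0 < A * g r := hAg r hr
  set W : ℝ → ℝ := fun t => -(S t * (A * g t) ^ (m - 1)) with hWdef
  have hwW : (fun t => S t * |deriv u t| ^ (m - 2) * deriv u t) =ᶠ[nhds r] W := by
    filter_upwards [isOpen_Ioo.mem_nhds hr] with t ht
    rw [hderivu' t ht]
    have h1 : |(-(A * g t))| = A * g t := by rw [abs_neg, abs_of_pos (hAg t ht)]
    rw [h1]
    have h2 : (A * g t) ^ (m - 2) * (A * g t) = (A * g t) ^ (m - 1) := by
      rw [← Real.rpow_add_one (hAg t ht).ne']
      congr 1; ring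
    simp only [hWdef]
    rw [← h2]
    ring
  set E : ℝ := Real.exp (-r / ρ) with hEdef
  have hb' : HasDerivAt (fun t : ℝ => 1 - Real.exp (-t / ρ)) (E / ρ) r := by
    have h1 : HasDerivAt (fun t : ℝ => -t / ρ) (-1 / ρ) r := by
      simpa using ((hasDerivAt_id r).neg.div_const ρ)
    have h2 := (h1.exp).const_sub 1
    refine h2.congr_deriv ?_
    rw [hEdef]
    field_simp
  set gd : ℝ := E / ρ * θ * b ^ (θ - 1) with hgddef
  have hg' : HasDerivAt g gd r := hb'.rpow_const (Or.inl hbr.ne')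
  obtain ⟨hSpos, hSdiff, hSderiv⟩ := hS r hr
  have hS' : HasDerivAt S (deriv S r) r := hSdiff.hasDerivAt
  have hpow : HasDerivAt (fun t => (A * g t) ^ (m - 1))
      ((m - 1) * (A * g r) ^ (m - 2) * (A * gd)) r := by
    have h := (hg'.const_mul A).rpow_const (p := m - 1) (Or.inl hAgr.ne')
    have h21 : m - 1 - 1 = m - 2 := by ring
    rw [h21] at h
    convert h using 1
    ring
  have hW : HasDerivAt W
      (-(deriv S r * (A * g r) ^ (m - 1) + S r * ((m - 1) * (A * g r) ^ (m - 2) * (A * gd)))) r :=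
    (hS'.mul hpow).neg
  constructor
  · exact hW.differentiableAt.congr_of_eventuallyEq hwW
  · rw [hwW.deriv_eq, hW.deriv, hderivu' r hr]
    have habs : |(-(A * g r))| = A * g r := by rw [abs_neg, abs_of_pos hAgr]
    rw [habs]
    -- key scalar inequality
    have hE1 : Real.exp (-1) ≤ E := by
      rw [hEdef]
      apply Real.exp_le_exp.mpr
      rw [neg_div, neg_le_neg_iff]
      exact (div_le_one hρ).mpr hr.2.le
    have hb1 : b ≤ 1 - Real.exp (-1) := by
      have : Real.exp (-1) ≤ Real.exp (-r / ρ) := hE1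
      rw [hbdef]; linarith
    have hc : θ * (m - 1 - q) - 1 ≤ 0 := by linarith
    have hbc : (1 - Real.exp (-1)) ^ (θ * (m - 1 - q) - 1) ≤ b ^ (θ * (m - 1 - q) - 1) :=
      Real.rpow_le_rpow_of_nonpos hbr hb1 hc
    have hKpos : 0 < θ * (m - 1) * A ^ (m - 1 - q) / ρ := by
      apply div_pos _ hρ
      exact mul_pos (mul_pos hθ (by linarith)) (Real.rpow_pos_of_pos hApos _)
    have hKl : l ≤ θ * (m - 1) * A ^ (m - 1 - q) / ρ * (b ^ (θ * (m - 1 - q) - 1) * E) := by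
      refine hlle.trans ?_
      have heq : Real.exp (-1) * θ * (m - 1) * A ^ (m - 1 - q)
          * (1 - Real.exp (-1)) ^ (θ * (m - 1 - q) - 1) / ρ
          = θ * (m - 1) * A ^ (m - 1 - q) / ρ
            * ((1 - Real.exp (-1)) ^ (θ * (m - 1 - q) - 1) * Real.exp (-1)) := by ring
      rw [heq]
      apply mul_le_mul_of_nonneg_left _ hKpos.le
      apply mul_le_mul hbc hE1 (Real.exp_pos _).le (Real.rpow_pos_of_pos hbr _).le
    have hgr : g r = b ^ θ := rfl
    have heq2 : (m - 1) * (A * g r) ^ (m - 2) * (A * gd)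
        = θ * (m - 1) * A ^ (m - 1 - q) / ρ * (b ^ (θ * (m - 1 - q) - 1) * E)
          * (A * g r) ^ q := by
      rw [hgr, hgddef]
      rw [Real.mul_rpow hApos.le (Real.rpow_nonneg hbr.le θ),
        Real.mul_rpow hApos.le (Real.rpow_nonneg hbr.le θ),
        ← Real.rpow_mul hbr.le, ← Real.rpow_mul hbr.le]
      have eA : A ^ (m - 1 - q) * A ^ q = A ^ (m - 2) * A := by
        rw [← Real.rpow_add hApos, ← Real.rpow_add_one hApos.ne']
        congr 1; ring
      have eB : b ^ (θ * (m - 1 - q) - 1) * b ^ (θ * q) = b ^ (θ * (m - 2)) * b ^ (θ - 1) := by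
        rw [← Real.rpow_add hbr, ← Real.rpow_add hbr]
        congr 1; ring
      linear_combination (-(m - 1) * θ * E / ρ * (b ^ (θ * (m - 2)) * b ^ (θ - 1))) * eA
        + (-(m - 1) * θ * E / ρ * (A ^ (m - 1 - q) * A ^ q)) * eB
    have hkey : l * (A * g r) ^ q ≤ (m - 1) * (A * g r) ^ (m - 2) * (A * gd) := by
      rw [heq2]
      exact mul_le_mul_of_nonneg_right hKl (Real.rpow_pos_of_pos hAgr q).le
    have hup1 : u r ^ p ≤ 1 := by
      obtain ⟨h0, h1⟩ := hbounds r ⟨hr.1.le, hr.2.le⟩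
      exact Real.rpow_le_one h0 h1 hp
    have hup0 : 0 ≤ u r ^ p :=
      Real.rpow_nonneg (hbounds r ⟨hr.1.le, hr.2.le⟩).1 p
    have hmain : l * S r * u r ^ p * (A * g r) ^ q
        ≤ S r * ((m - 1) * (A * g r) ^ (m - 2) * (A * gd)) := by
      have step1 : l * S r * u r ^ p * (A * g r) ^ q ≤ l * S r * (A * g r) ^ q := by
        have h1 : l * S r * u r ^ p ≤ l * S r := by
          nlinarith [mul_pos hl hSpos]
        exact mul_le_mul_of_nonneg_right h1 (Real.rpow_pos_of_pos hAgr q).le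
      refine step1.trans ?_
      have h2 : l * S r * (A * g r) ^ q = S r * (l * (A * g r) ^ q) := by ring
      rw [h2]
      exact mul_le_mul_of_nonneg_left hkey hSpos.le
    have hfirst : 0 ≤ deriv S r * (A * g r) ^ (m - 1) :=
      mul_nonneg hSderiv (Real.rpow_pos_of_pos hAgr _).le
    linarith
end

section
/- (Exponential radial supersolution on the critical line p + q = m − 1 with p > 0; proof of Theorem 1.5 (E), case p > 0) Let m > 1, p > 0, q = m − 1 − p, ι > 0, η > 0, and define S(r) = ι·e^{ι r} and u(r) = e^{−η r}. Then the radial inequality (S·|u'|^{m−2}·u')'(r) + S(r)·u(r)^p·|u'(r)|^q ≤ 0 holds for all r ∈ ℝ if and only if ι ≥ η^{−p} + η·(m − 1). In particular, since the right-hand side is minimized at η = (p/(m−1))^{1/(p+1)} with minimal value H(p) = ((m−1)/p)^{p/(p+1)} + (m−1)·((m−1)/p)^{−1/(p+1)}, such an η exists whenever ι ≥ H(p). -/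
open MeasureTheory Real

private lemma exp_form (p c : ℝ) (hp : 0 < p) (hc : 0 < c) :
    ((p/c) ^ (1/(p+1))) ^ (-p) = (c/p) ^ (p/(p+1)) ∧
    ((p/c) ^ (1/(p+1))) * c = p * (c/p) ^ (p/(p+1)) ∧
    c * (c/p) ^ (-(1/(p+1))) = p * (c/p) ^ (p/(p+1)) := by
  have hp1 : (0:ℝ) < p + 1 := by linarith
  have hpc : 0 < p / c := div_pos hp hc
  have hcp : 0 < c / p := div_pos hc hp
  refine ⟨?_, ?_, ?_⟩
  · rw [← Real.rpow_mul hpc.le, show c/p = (p/c)⁻¹ by rw [inv_div],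
      Real.inv_rpow hpc.le, ← Real.rpow_neg hpc.le]
    congr 1
    field_simp
  · have l1 : (p/c) ^ (1/(p+1)) * c
        = Real.exp ((Real.log p - Real.log c) * (1/(p+1)) + Real.log c) := by
      rw [Real.exp_add, Real.exp_log hc, Real.rpow_def_of_pos hpc,
        Real.log_div hp.ne' hc.ne']
    have l2 : p * (c/p) ^ (p/(p+1))
        = Real.exp (Real.log p + (Real.log c - Real.log p) * (p/(p+1))) := by
      rw [Real.exp_add, Real.exp_log hp, Real.rpow_def_of_pos hcp,
        Real.log_div hc.ne' hp.ne']
    rw [l1, l2, Real.exp_eq_exp]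
    field_simp
    ring
  · have l1 : c * (c/p) ^ (-(1/(p+1)))
        = Real.exp (Real.log c + (Real.log c - Real.log p) * (-(1/(p+1)))) := by
      rw [Real.exp_add, Real.exp_log hc, Real.rpow_def_of_pos hcp,
        Real.log_div hc.ne' hp.ne']
    have l2 : p * (c/p) ^ (p/(p+1))
        = Real.exp (Real.log p + (Real.log c - Real.log p) * (p/(p+1))) := by
      rw [Real.exp_add, Real.exp_log hp, Real.rpow_def_of_pos hcp,
        Real.log_div hc.ne' hp.ne']
    rw [l1, l2, Real.exp_eq_exp]
    field_simp
    ring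

private lemma amgm_aux (p c : ℝ) (hp : 0 < p) (hc : 0 < c) (η' : ℝ) (hη' : 0 < η') :
    (p+1) * (c/p) ^ (p/(p+1)) ≤ η' ^ (-p) + η' * c := by
  have hp1 : (0:ℝ) < p + 1 := by linarith
  have h := Real.geom_mean_le_arith_mean2_weighted
    (w₁ := 1/(p+1)) (w₂ := p/(p+1))
    (p₁ := (p+1) * η' ^ (-p)) (p₂ := ((p+1)/p) * (η' * c))
    (by positivity) (by positivity) (by positivity) (by positivity) (by field_simp; ring)
  have hrhs : 1/(p+1) * ((p+1) * η' ^ (-p)) + p/(p+1) * (((p+1)/p) * (η' * c))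
      = η' ^ (-p) + η' * c := by
    field_simp
  have hlhs : ((p+1) * η' ^ (-p)) ^ (1/(p+1)) * (((p+1)/p) * (η' * c)) ^ (p/(p+1))
      = (p+1) * (c/p) ^ (p/(p+1)) := by
    have l1 : ((p+1) * η' ^ (-p)) ^ (1/(p+1))
        = Real.exp ((Real.log (p+1) + (-p) * Real.log η') * (1/(p+1))) := by
      rw [Real.rpow_def_of_pos (by positivity), Real.log_mul hp1.ne' (by positivity),
        Real.log_rpow hη']
    have l2 : (((p+1)/p) * (η' * c)) ^ (p/(p+1))
        = Real.exp (((Real.log (p+1) - Real.log p) + (Real.log η' + Real.log c)) * (p/(p+1))) := by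
      rw [Real.rpow_def_of_pos (by positivity), Real.log_mul (by positivity) (by positivity),
        Real.log_div hp1.ne' hp.ne', Real.log_mul hη'.ne' hc.ne']
    have l3 : (p+1) * (c/p) ^ (p/(p+1))
        = Real.exp (Real.log (p+1) + (Real.log c - Real.log p) * (p/(p+1))) := by
      rw [Real.exp_add, Real.exp_log hp1, Real.rpow_def_of_pos (div_pos hc hp),
        Real.log_div hc.ne' hp.ne']
    rw [l1, l2, l3, ← Real.exp_add, Real.exp_eq_exp]
    field_simp
    ring
  rw [hlhs, hrhs] at h
  exact h

/-- Exponential radial supersolution on the critical line `p + q = m − 1`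
with `p > 0` (proof of Theorem 1.5 (E), case `p > 0`). -/
theorem radial_supersolution_critical_line_pos
    (m p q ι η : ℝ)
    (hm : 1 < m) (hp : 0 < p) (hq : q = m - 1 - p)
    (hι : 0 < ι) (hη : 0 < η)
    (S u : ℝ → ℝ)
    (hS : ∀ r : ℝ, S r = ι * Real.exp (ι * r))
    (hu : ∀ r : ℝ, u r = Real.exp (-η * r)) :
    -- the radial inequality holds everywhere iff ι ≥ η^{-p} + η (m-1)
    ((∀ r : ℝ,
        DifferentiableAt ℝ (fun t => S t * |deriv u t| ^ (m - 2) * deriv u t) r ∧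
        deriv (fun t => S t * |deriv u t| ^ (m - 2) * deriv u t) r
          + S r * u r ^ p * |deriv u r| ^ q ≤ 0) ↔
      η ^ (-p) + η * (m - 1) ≤ ι) ∧
    -- the function η' ↦ η'^{-p} + η'(m-1) is minimized at (p/(m-1))^{1/(p+1)}
    (∀ η' : ℝ, 0 < η' →
      ((p / (m - 1)) ^ (1 / (p + 1))) ^ (-p)
          + ((p / (m - 1)) ^ (1 / (p + 1))) * (m - 1)
        ≤ η' ^ (-p) + η' * (m - 1)) ∧
    -- the minimal value is H(p)
    (((p / (m - 1)) ^ (1 / (p + 1))) ^ (-p)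
        + ((p / (m - 1)) ^ (1 / (p + 1))) * (m - 1)
      = ((m - 1) / p) ^ (p / (p + 1))
        + (m - 1) * ((m - 1) / p) ^ (-(1 / (p + 1)))) ∧
    -- in particular, if ι ≥ H(p) a suitable η' exists
    (((m - 1) / p) ^ (p / (p + 1))
        + (m - 1) * ((m - 1) / p) ^ (-(1 / (p + 1))) ≤ ι →
      ∃ η' : ℝ, 0 < η' ∧ η' ^ (-p) + η' * (m - 1) ≤ ι) := by
  have hm1 : (0:ℝ) < m - 1 := by linarith
  obtain ⟨e1, e2, e3⟩ := exp_form p (m-1) hp hm1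
  -- derivative of u
  have hu' : u = fun r => Real.exp (-η * r) := funext hu
  have hdu : ∀ r : ℝ, HasDerivAt u (-η * Real.exp (-η * r)) r := by
    intro r
    rw [hu']
    have := ((hasDerivAt_id r).const_mul (-η)).exp
    simpa [mul_comm] using this
  have hderiv : ∀ r, deriv u r = -η * Real.exp (-η * r) := fun r => (hdu r).deriv
  have habs : ∀ r, |deriv u r| = η * Real.exp (-η * r) := by
    intro r
    rw [hderiv r, abs_mul, abs_neg, abs_of_pos hη, abs_of_pos (Real.exp_pos _)]
  set k : ℝ := -(ι * η ^ (m-1)) with hk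
  set w : ℝ := ι - η * (m-1) with hw
  have hF : (fun t => S t * |deriv u t| ^ (m - 2) * deriv u t)
      = fun t => k * Real.exp (w * t) := by
    funext t
    rw [hS, habs, hderiv]
    rw [Real.mul_rpow hη.le (Real.exp_pos _).le, ← Real.exp_mul]
    have hηm : η ^ (m-1) = η ^ (m-2) * η := by
      rw [show m - 1 = (m-2) + 1 by ring, Real.rpow_add_one hη.ne']
    have e : Real.exp (ι*t) * Real.exp (-η*t*(m-2)) * Real.exp (-η*t)
        = Real.exp (w * t) := by
      rw [← Real.exp_add, ← Real.exp_add, hw]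
      congr 1
      ring
    rw [hk, hηm]
    linear_combination (-(ι * (η ^ (m-2) * η))) * e
  have hK : ∀ r : ℝ, HasDerivAt (fun t => k * Real.exp (w * t)) (k * w * Real.exp (w * r)) r := by
    intro r
    have := (((hasDerivAt_id r).const_mul w).exp).const_mul k
    simpa [mul_comm, mul_assoc, mul_left_comm] using this
  have hT : ∀ r : ℝ, S r * u r ^ p * |deriv u r| ^ q = ι * η ^ q * Real.exp (w * r) := by
    intro r
    rw [hS, hu, habs, Real.mul_rpow hη.le (Real.exp_pos _).le, ← Real.exp_mul, ← Real.exp_mul]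
    have e : Real.exp (ι*r) * Real.exp (-η*r*p) * Real.exp (-η*r*q) = Real.exp (w*r) := by
      rw [← Real.exp_add, ← Real.exp_add, hw, hq]
      congr 1
      ring
    linear_combination (ι * η ^ q) * e
  have hqsplit : η ^ q = η ^ (m-1) * η ^ (-p) := by
    rw [hq, show m-1-p = (m-1)+(-p) by ring, Real.rpow_add hη]
  have hpow : 0 < η ^ (m-1) := Real.rpow_pos_of_pos hη _
  have hkey : (k * w + ι * η ^ q ≤ 0) ↔ η ^ (-p) + η * (m-1) ≤ ι := by
    rw [hk, hw, hqsplit]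
    constructor
    · intro h
      nlinarith [mul_pos hι hpow]
    · intro h
      nlinarith [mul_pos hι hpow]
  refine ⟨?_, ?_, ?_, ?_⟩
  · constructor
    · intro h
      have h0 := (h 0).2
      rw [hF, (hK 0).deriv, hT 0] at h0
      simp only [mul_zero, Real.exp_zero, mul_one] at h0
      exact hkey.mp h0
    · intro hle r
      have hc : k * w + ι * η ^ q ≤ 0 := hkey.mpr hle
      constructor
      · rw [hF]
        exact ((hK r).differentiableAt)
      · rw [hF, (hK r).deriv, hT r]
        nlinarith [mul_nonpos_of_nonpos_of_nonneg hc (Real.exp_pos (w*r)).le]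
  · intro η' hη'
    have := amgm_aux p (m-1) hp hm1 η' hη'
    linarith
  · linarith
  · intro hH
    refine ⟨(p/(m-1)) ^ (1/(p+1)), Real.rpow_pos_of_pos (div_pos hp hm1) _, ?_⟩
    linarith
end

section
/- (Near-origin radial supersolution on the critical line p + q = m − 1 with p > 0; proof of Theorem 1.5 (E), case p > 0) Let m > 1, p > 0, q = m − 1 − p, c₀ > 0, and set R = (p+1)^{p/(p+1)}·(m−1)^{1/(p+1)}/p. Define u₀(r) = c₀ − c₀·(p r)^{(p+1)/p} / ((p+1)·(m−1)^{1/p}). Let S be a differentiable function on (0, R) with S > 0 and S' ≥ 0 there. Then u₀(r) > 0 for all r ∈ (0, R), u₀'(r) < 0 there, and the radial inequality (S·|u₀'|^{m−2}·u₀')'(r) + S(r)·u₀(r)^p·|u₀'(r)|^q ≤ 0 holds for all r ∈ (0, R). -/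
open MeasureTheory Real

/-- Near-origin radial supersolution on the critical line `p + q = m − 1`
with `p > 0` (proof of Theorem 1.5 (E), case `p > 0`). -/
theorem radial_supersolution_near_origin_critical_line
    (m p q c₀ R : ℝ)
    (hm : 1 < m) (hp : 0 < p) (hq : q = m - 1 - p) (hc₀ : 0 < c₀)
    (hR : R = (p + 1) ^ (p / (p + 1)) * (m - 1) ^ (1 / (p + 1)) / p)
    (u₀ S : ℝ → ℝ)
    (hu₀ : ∀ r : ℝ, 0 < r →
      u₀ r = c₀ - c₀ * (p * r) ^ ((p + 1) / p) / ((p + 1) * (m - 1) ^ (1 / p)))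
    (hS : ∀ r ∈ Set.Ioo (0 : ℝ) R,
      0 < S r ∧ DifferentiableAt ℝ S r ∧ 0 ≤ deriv S r) :
    ∀ r ∈ Set.Ioo (0 : ℝ) R,
      0 < u₀ r ∧ deriv u₀ r < 0 ∧
      DifferentiableAt ℝ (fun t => S t * |deriv u₀ t| ^ (m - 2) * deriv u₀ t) r ∧
      deriv (fun t => S t * |deriv u₀ t| ^ (m - 2) * deriv u₀ t) r
        + S r * u₀ r ^ p * |deriv u₀ r| ^ q ≤ 0 := by
  have hm1 : (0:ℝ) < m - 1 := by linarith
  have hp1 : (0:ℝ) < p + 1 := by linarith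
  have hm1p : (0:ℝ) < (m - 1) ^ (1 / p) := Real.rpow_pos_of_pos hm1 _
  set D : ℝ := c₀ / (m - 1) ^ (1 / p) with hD
  have hDpos : 0 < D := div_pos hc₀ hm1p
  set s : ℝ := (m - 1) / p with hs
  have hspos : 0 < s := div_pos hm1 hp
  set C : ℝ := D ^ (m - 1) with hC
  have hCpos : 0 < C := Real.rpow_pos_of_pos hDpos _
  -- derivative of u₀ at any t > 0
  have hder : ∀ t : ℝ, 0 < t →
      HasDerivAt u₀ (-(c₀ * (p * t) ^ (1 / p) / ((m - 1) ^ (1 / p)))) t := by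
    intro t ht
    have hpt : 0 < p * t := mul_pos hp ht
    have h1 : HasDerivAt (fun x : ℝ => p * x) (p * 1) t := (hasDerivAt_id t).const_mul p
    have h2 : HasDerivAt (fun x : ℝ => (p * x) ^ ((p + 1) / p))
        ((p * 1) * ((p + 1) / p) * (p * t) ^ ((p + 1) / p - 1)) t :=
      h1.rpow_const (Or.inl hpt.ne')
    have h3 : HasDerivAt
        (fun x : ℝ => c₀ - c₀ * (p * x) ^ ((p + 1) / p) / ((p + 1) * (m - 1) ^ (1 / p)))
        (-(c₀ * ((p * 1) * ((p + 1) / p) * (p * t) ^ ((p + 1) / p - 1))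
          / ((p + 1) * (m - 1) ^ (1 / p)))) t :=
      (((h2.const_mul c₀).div_const _)).const_sub c₀
    have hev : u₀ =ᶠ[nhds t]
        (fun x : ℝ => c₀ - c₀ * (p * x) ^ ((p + 1) / p) / ((p + 1) * (m - 1) ^ (1 / p))) :=
      Filter.eventually_of_mem (isOpen_Ioi.mem_nhds ht) (fun x hx => hu₀ x hx)
    have h4 := h3.congr_of_eventuallyEq hev
    refine h4.congr_deriv ?_
    have he : (p + 1) / p - 1 = 1 / p := by field_simp; ring
    rw [he]
    field_simp
  have hderiv : ∀ t : ℝ, 0 < t →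
      deriv u₀ t = -(c₀ * (p * t) ^ (1 / p) / ((m - 1) ^ (1 / p))) :=
    fun t ht => (hder t ht).deriv
  -- key simplification of the flux
  have hkey : ∀ t : ℝ, 0 < t →
      S t * |deriv u₀ t| ^ (m - 2) * deriv u₀ t = -C * (S t * (p * t) ^ s) := by
    intro t ht
    have hpt : 0 < p * t := mul_pos hp ht
    have hb : 0 < c₀ * (p * t) ^ (1 / p) / ((m - 1) ^ (1 / p)) :=
      div_pos (mul_pos hc₀ (Real.rpow_pos_of_pos hpt _)) hm1p
    set b : ℝ := c₀ * (p * t) ^ (1 / p) / ((m - 1) ^ (1 / p)) with hbdef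
    rw [hderiv t ht, abs_neg, abs_of_pos hb]
    have hb1 : b ^ (m - 2) * b = b ^ (m - 1) := by
      rw [← Real.rpow_add_one hb.ne' (m - 2)]
      congr 1; ring
    have hb2 : b ^ (m - 1) = C * (p * t) ^ s := by
      have hbD : b = D * (p * t) ^ (1 / p) := by rw [hbdef, hD]; ring
      have hexp : ((p * t) ^ (1 / p)) ^ (m - 1) = (p * t) ^ s := by
        rw [← Real.rpow_mul hpt.le]
        congr 1
        rw [hs]; field_simp
      rw [hbD, Real.mul_rpow hDpos.le (Real.rpow_pos_of_pos hpt _).le, hexp, ← hC]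
    calc S t * b ^ (m - 2) * (-b) = -(S t * (b ^ (m - 2) * b)) := by ring
      _ = -C * (S t * (p * t) ^ s) := by rw [hb1, hb2]; ring
  intro r hr
  obtain ⟨hr0, hrR⟩ := hr
  obtain ⟨hSr, hSd, hSd0⟩ := hS r ⟨hr0, hrR⟩
  have hpr : 0 < p * r := mul_pos hp hr0
  -- positivity of u₀
  have hu0lt : u₀ r ≤ c₀ := by
    rw [hu₀ r hr0]
    have : 0 ≤ c₀ * (p * r) ^ ((p + 1) / p) / ((p + 1) * (m - 1) ^ (1 / p)) := by positivity
    linarith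
  have hu0pos : 0 < u₀ r := by
    rw [hu₀ r hr0]
    have hkey2 : (p * r) ^ ((p + 1) / p) < (p + 1) * (m - 1) ^ (1 / p) := by
      have hpR : p * R = (p + 1) ^ (p / (p + 1)) * (m - 1) ^ (1 / (p + 1)) := by
        rw [hR]; field_simp
      have h1 : (p * r) ^ ((p + 1) / p) < (p * R) ^ ((p + 1) / p) := by
        apply Real.rpow_lt_rpow hpr.le _ (by positivity)
        exact (mul_lt_mul_iff_right₀ hp).2 hrR
      have h2 : (p * R) ^ ((p + 1) / p) = (p + 1) * (m - 1) ^ (1 / p) := by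
        rw [hpR, Real.mul_rpow (by positivity) (by positivity),
          ← Real.rpow_mul hp1.le, ← Real.rpow_mul hm1.le]
        have e1 : p / (p + 1) * ((p + 1) / p) = 1 := by field_simp
        have e2 : 1 / (p + 1) * ((p + 1) / p) = 1 / p := by field_simp
        rw [e1, e2, Real.rpow_one]
      linarith
    have hpos : 0 < (p + 1) * (m - 1) ^ (1 / p) := by positivity
    rw [sub_pos, div_lt_iff₀ hpos]
    calc c₀ * (p * r) ^ ((p + 1) / p) < c₀ * ((p + 1) * (m - 1) ^ (1 / p)) := by
          exact (mul_lt_mul_iff_right₀ hc₀).2 hkey2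
      _ = c₀ * ((p + 1) * (m - 1) ^ (1 / p)) := rfl
  -- derivative negative
  have hdr : deriv u₀ r = -(c₀ * (p * r) ^ (1 / p) / ((m - 1) ^ (1 / p))) := hderiv r hr0
  have hdneg : deriv u₀ r < 0 := by
    rw [hdr]
    have : 0 < c₀ * (p * r) ^ (1 / p) / ((m - 1) ^ (1 / p)) := by positivity
    linarith
  -- derivative of the flux
  have h2' : HasDerivAt (fun t : ℝ => (p * t) ^ s) ((p * 1) * s * (p * r) ^ (s - 1)) r :=
    (((hasDerivAt_id r).const_mul p)).rpow_const (Or.inl hpr.ne')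
  have hgw : HasDerivAt (fun t : ℝ => -C * (S t * (p * t) ^ s))
      (-C * (deriv S r * (p * r) ^ s + S r * ((p * 1) * s * (p * r) ^ (s - 1)))) r :=
    (hSd.hasDerivAt.mul h2').const_mul (-C)
  have hev : (fun t => S t * |deriv u₀ t| ^ (m - 2) * deriv u₀ t)
      =ᶠ[nhds r] (fun t : ℝ => -C * (S t * (p * t) ^ s)) :=
    Filter.eventually_of_mem (isOpen_Ioi.mem_nhds hr0) (fun t ht => hkey t ht)
  have hw : HasDerivAt (fun t => S t * |deriv u₀ t| ^ (m - 2) * deriv u₀ t)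
      (-C * (deriv S r * (p * r) ^ s + S r * ((p * 1) * s * (p * r) ^ (s - 1)))) r :=
    hgw.congr_of_eventuallyEq hev
  refine ⟨hu0pos, hdneg, hw.differentiableAt, ?_⟩
  rw [hw.deriv, hdr, abs_neg,
    abs_of_pos (show (0:ℝ) < c₀ * (p * r) ^ (1 / p) / ((m - 1) ^ (1 / p)) by positivity)]
  -- rewrite |u₀'|^q
  have hbq : (c₀ * (p * r) ^ (1 / p) / ((m - 1) ^ (1 / p))) ^ q = D ^ q * (p * r) ^ (s - 1) := by
    have hbD : c₀ * (p * r) ^ (1 / p) / ((m - 1) ^ (1 / p)) = D * (p * r) ^ (1 / p) := by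
      rw [hD]; ring
    have hexp : ((p * r) ^ (1 / p)) ^ q = (p * r) ^ (s - 1) := by
      rw [← Real.rpow_mul hpr.le]
      congr 1
      rw [hq, hs]; field_simp
    rw [hbD, Real.mul_rpow hDpos.le (Real.rpow_pos_of_pos hpr _).le, hexp]
  rw [hbq]
  -- main estimate
  have hDq : (0:ℝ) < D ^ q := Real.rpow_pos_of_pos hDpos _
  have h1 : u₀ r ^ p * D ^ q ≤ C * (p * s) := by
    have hps : p * s = m - 1 := by rw [hs]; field_simp
    have hCsplit : C = D ^ p * D ^ q := by
      rw [hC, ← Real.rpow_add hDpos, hq]; ring_nf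
    have hDp : D ^ p * (m - 1) = c₀ ^ p := by
      rw [hD, Real.div_rpow hc₀.le hm1p.le, ← Real.rpow_mul hm1.le,
        show 1 / p * p = 1 by field_simp, Real.rpow_one]
      field_simp
    have hup : u₀ r ^ p ≤ c₀ ^ p := Real.rpow_le_rpow hu0pos.le hu0lt hp.le
    calc u₀ r ^ p * D ^ q ≤ c₀ ^ p * D ^ q := by
          exact mul_le_mul_of_nonneg_right hup hDq.le
      _ = C * (p * s) := by rw [hps, hCsplit]; rw [← hDp]; ring
  have hX : (0:ℝ) < (p * r) ^ s := Real.rpow_pos_of_pos hpr _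
  have hY : (0:ℝ) < (p * r) ^ (s - 1) := Real.rpow_pos_of_pos hpr _
  have hrearr : -C * (deriv S r * (p * r) ^ s + S r * ((p * 1) * s * (p * r) ^ (s - 1)))
      + S r * u₀ r ^ p * (D ^ q * (p * r) ^ (s - 1))
      = -(C * deriv S r * (p * r) ^ s)
        + S r * (p * r) ^ (s - 1) * (u₀ r ^ p * D ^ q - C * (p * s)) := by ring
  rw [hrearr]
  have ht1 : 0 ≤ C * deriv S r * (p * r) ^ s := by positivity
  have ht2 : S r * (p * r) ^ (s - 1) * (u₀ r ^ p * D ^ q - C * (p * s)) ≤ 0 :=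
    mul_nonpos_of_nonneg_of_nonpos (by positivity) (by linarith)
  linarith
end

section
/- (Exponential radial supersolution for p = 0, q = m − 1; proof of Theorem 1.5 (E), case p = 0) Let m > 1, ι > 1, η > 0, and define S(r) = ι·e^{ι r} and u(r) = e^{−η r}. Then the radial inequality (S·|u'|^{m−2}·u')'(r) + S(r)·|u'(r)|^{m−1} ≤ 0 holds for all r ∈ ℝ if and only if η ≤ (ι − 1)/(m − 1). -/
open MeasureTheory Real

/-- Exponential radial supersolution for `p = 0`, `q = m − 1`
(proof of Theorem 1.5 (E), case `p = 0`). -/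
theorem radial_supersolution_critical_line_p_zero
    (m ι η : ℝ) (hm : 1 < m) (hι : 1 < ι) (hη : 0 < η)
    (S u : ℝ → ℝ)
    (hS : ∀ r : ℝ, S r = ι * Real.exp (ι * r))
    (hu : ∀ r : ℝ, u r = Real.exp (-η * r)) :
    (∀ r : ℝ,
      DifferentiableAt ℝ (fun t => S t * |deriv u t| ^ (m - 2) * deriv u t) r ∧
      deriv (fun t => S t * |deriv u t| ^ (m - 2) * deriv u t) r
        + S r * |deriv u r| ^ (m - 1) ≤ 0) ↔
    η ≤ (ι - 1) / (m - 1) := by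
  have hm1 : (0:ℝ) < m - 1 := by linarith
  set c : ℝ := ι - η * (m - 1) with hc
  have hu' : u = fun r => Real.exp (-η * r) := funext hu
  have hdu : ∀ t : ℝ, deriv u t = -η * Real.exp (-η * t) := by
    intro t
    rw [hu']
    have h : HasDerivAt (fun r : ℝ => Real.exp (-η * r))
        (Real.exp (-η * t) * (-η * 1)) t :=
      ((hasDerivAt_id t).const_mul (-η)).exp
    simpa [mul_comm] using h.deriv
  have habs : ∀ t : ℝ, |deriv u t| = η * Real.exp (-η * t) := by
    intro t
    rw [hdu t, abs_mul, abs_neg, abs_of_pos hη, abs_of_pos (Real.exp_pos _)]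
  have hpow : ∀ (a t : ℝ), (η * Real.exp (-η * t)) ^ a
      = η ^ a * Real.exp (-η * t * a) := by
    intro a t
    rw [Real.mul_rpow hη.le (Real.exp_pos _).le, ← Real.exp_mul]
  have hηm : η ^ (m - 2) * η = η ^ (m - 1) := by
    rw [← Real.rpow_add_one hη.ne']
    ring_nf
  have hf : (fun t => S t * |deriv u t| ^ (m - 2) * deriv u t)
      = fun t => -(ι * η ^ (m - 1)) * Real.exp (c * t) := by
    funext t
    rw [habs t, hdu t, hS t, hpow]
    rw [show ι * Real.exp (ι * t) * (η ^ (m - 2) * Real.exp (-η * t * (m - 2)))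
        * (-η * Real.exp (-η * t))
        = -(ι * (η ^ (m - 2) * η)) * (Real.exp (ι * t) * Real.exp (-η * t * (m - 2))
          * Real.exp (-η * t)) by ring, hηm,
      ← Real.exp_add, ← Real.exp_add]
    rw [hc]
    ring_nf
  have hA : ∀ r : ℝ, S r * |deriv u r| ^ (m - 1)
      = ι * η ^ (m - 1) * Real.exp (c * r) := by
    intro r
    rw [habs r, hS r, hpow,
      show ι * Real.exp (ι * r) * (η ^ (m - 1) * Real.exp (-η * r * (m - 1)))
        = ι * η ^ (m - 1) * (Real.exp (ι * r) * Real.exp (-η * r * (m - 1))) by ring,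
      ← Real.exp_add, hc]
    ring_nf
  have hderivf : ∀ r : ℝ,
      deriv (fun t => S t * |deriv u t| ^ (m - 2) * deriv u t) r
        = -(ι * η ^ (m - 1)) * (c * Real.exp (c * r)) := by
    intro r
    rw [hf]
    have h : HasDerivAt (fun t : ℝ => -(ι * η ^ (m - 1)) * Real.exp (c * t))
        (-(ι * η ^ (m - 1)) * (Real.exp (c * r) * (c * 1))) r :=
      (((hasDerivAt_id r).const_mul c).exp).const_mul _
    simpa [mul_comm, mul_assoc, mul_left_comm] using h.deriv
  have hdiff : ∀ r : ℝ,
      DifferentiableAt ℝ (fun t => S t * |deriv u t| ^ (m - 2) * deriv u t) r := by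
    intro r
    rw [hf]
    exact ((((hasDerivAt_id r).const_mul c).exp).const_mul _).differentiableAt
  have hpos : 0 < ι * η ^ (m - 1) :=
    mul_pos (by linarith) (Real.rpow_pos_of_pos hη _)
  constructor
  · intro h
    have h0 := (h 0).2
    rw [hderivf 0, hA 0] at h0
    simp only [mul_zero, Real.exp_zero, mul_one] at h0
    -- h0 : -(ι * η^(m-1)) * c + ι * η^(m-1) ≤ 0
    have hc1 : 1 ≤ c := by nlinarith
    rw [le_div_iff₀ hm1]
    rw [hc] at hc1
    linarith
  · intro h r
    refine ⟨hdiff r, ?_⟩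
    rw [hderivf r, hA r]
    have hc1 : 1 ≤ c := by
      rw [hc]
      have := (le_div_iff₀ hm1).mp h
      linarith
    have hexp : 0 < Real.exp (c * r) := Real.exp_pos _
    have key : ι * η ^ (m - 1) * Real.exp (c * r)
        ≤ ι * η ^ (m - 1) * (c * Real.exp (c * r)) := by
      apply mul_le_mul_of_nonneg_left _ hpos.le
      nlinarith
    linarith
end

section
/- (Near-origin radial supersolution for p = 0, q = m − 1; proof of Theorem 1.5 (E), case p = 0) Let m > 1, α > 1, c₀ > 0, and define u₀(r) = c₀ − r^α. Set R₁ = min{c₀^{1/α}, (m−1)(α−1)}, and let S be a differentiable function on (0, R₁) with S > 0 and S' ≥ 0 there. Then u₀(r) > 0 and u₀'(r) < 0 for all r ∈ (0, R₁), and the radial inequality (S·|u₀'|^{m−2}·u₀')'(r) + S(r)·|u₀'(r)|^{m−1} ≤ 0 holds for all r ∈ (0, R₁). -/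
open MeasureTheory Real

/-- Near-origin radial supersolution for `p = 0`, `q = m − 1`
(proof of Theorem 1.5 (E), case `p = 0`). -/
theorem radial_supersolution_near_origin_p_zero
    (m α c₀ R₁ : ℝ)
    (hm : 1 < m) (hα : 1 < α) (hc₀ : 0 < c₀)
    (hR₁ : R₁ = min (c₀ ^ (1 / α)) ((m - 1) * (α - 1)))
    (u₀ S : ℝ → ℝ)
    (hu₀ : ∀ r : ℝ, 0 < r → u₀ r = c₀ - r ^ α)
    (hS : ∀ r ∈ Set.Ioo (0 : ℝ) R₁,
      0 < S r ∧ DifferentiableAt ℝ S r ∧ 0 ≤ deriv S r) :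
    ∀ r ∈ Set.Ioo (0 : ℝ) R₁,
      0 < u₀ r ∧ deriv u₀ r < 0 ∧
      DifferentiableAt ℝ (fun t => S t * |deriv u₀ t| ^ (m - 2) * deriv u₀ t) r ∧
      deriv (fun t => S t * |deriv u₀ t| ^ (m - 2) * deriv u₀ t) r
        + S r * |deriv u₀ r| ^ (m - 1) ≤ 0 := by
  intro r hr
  obtain ⟨hr0, hrR⟩ := hr
  obtain ⟨hSpos, hSdiff, hSder⟩ := hS r ⟨hr0, hrR⟩
  have hα0 : (0:ℝ) < α := lt_trans one_pos hα
  set β : ℝ := (α - 1) * (m - 1) with hβ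
  have hβpos : 0 < β := mul_pos (sub_pos.2 hα) (sub_pos.2 hm)
  -- r < β
  have hrβ : r < β := by
    have := lt_of_lt_of_le hrR (hR₁ ▸ min_le_right _ _)
    nlinarith
  -- derivative of u₀ on Ioi 0
  have hderiv : ∀ t : ℝ, 0 < t → HasDerivAt u₀ (-(α * t ^ (α - 1))) t := by
    intro t ht
    have h1 : HasDerivAt (fun x : ℝ => c₀ - x ^ α) (-(α * t ^ (α - 1))) t := by
      have := (Real.hasDerivAt_rpow_const (x := t) (p := α) (Or.inl (ne_of_gt ht)))
      simpa using (this.const_sub c₀)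
    apply h1.congr_of_eventuallyEq
    filter_upwards [Ioi_mem_nhds ht] with x hx
    exact hu₀ x hx
  have hderiv' : ∀ t : ℝ, 0 < t → deriv u₀ t = -(α * t ^ (α - 1)) :=
    fun t ht => (hderiv t ht).deriv
  have hrα1 : (0:ℝ) < r ^ (α - 1) := Real.rpow_pos_of_pos hr0 _
  -- positivity of u₀
  have hu₀pos : 0 < u₀ r := by
    rw [hu₀ r hr0, sub_pos]
    have hrlt : r < c₀ ^ (1 / α) := lt_of_lt_of_le hrR (hR₁ ▸ min_le_left _ _)
    have := Real.rpow_lt_rpow hr0.le hrlt hα0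
    rwa [← Real.rpow_mul hc₀.le, one_div_mul_cancel (ne_of_gt hα0), Real.rpow_one] at this
  have hu₀' : deriv u₀ r < 0 := by
    rw [hderiv' r hr0]
    exact neg_lt_zero.2 (mul_pos hα0 hrα1)
  -- key pointwise identity
  have keyeq : ∀ t : ℝ, 0 < t →
      S t * |deriv u₀ t| ^ (m - 2) * deriv u₀ t = -(α ^ (m - 1)) * (S t * t ^ β) := by
    intro t ht
    have htα : 0 < t ^ (α - 1) := Real.rpow_pos_of_pos ht _
    have habs : |(-(α * t ^ (α - 1)))| = α * t ^ (α - 1) := by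
      rw [abs_neg, abs_of_pos (mul_pos hα0 htα)]
    rw [hderiv' t ht, habs, Real.mul_rpow hα0.le htα.le, ← Real.rpow_mul ht.le]
    have h1 : α ^ (m - 2) * α = α ^ (m - 1) := by
      have h : m - 2 + 1 = m - 1 := by ring
      rw [← h, Real.rpow_add_one (ne_of_gt hα0)]
    have h2 : t ^ ((α - 1) * (m - 2)) * t ^ (α - 1) = t ^ β := by
      have h : (α - 1) * (m - 2) + (α - 1) = β := by rw [hβ]; ring
      rw [← h, Real.rpow_add ht]
    calc S t * (α ^ (m - 2) * t ^ ((α - 1) * (m - 2))) * (-(α * t ^ (α - 1)))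
        = -((α ^ (m - 2) * α) * ((t ^ ((α - 1) * (m - 2)) * t ^ (α - 1)) * S t)) := by ring
      _ = -(α ^ (m - 1)) * (S t * t ^ β) := by rw [h1, h2]; ring
  -- derivative of the comparison function
  have hrβd : HasDerivAt (fun t : ℝ => t ^ β) (β * r ^ (β - 1)) r :=
    Real.hasDerivAt_rpow_const (Or.inl hr0.ne')
  have hH : HasDerivAt (fun t : ℝ => -(α ^ (m - 1)) * (S t * t ^ β))
      (-(α ^ (m - 1)) * (deriv S r * r ^ β + S r * (β * r ^ (β - 1)))) r :=
    (hSdiff.hasDerivAt.mul hrβd).const_mul _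
  have hG : HasDerivAt (fun t => S t * |deriv u₀ t| ^ (m - 2) * deriv u₀ t)
      (-(α ^ (m - 1)) * (deriv S r * r ^ β + S r * (β * r ^ (β - 1)))) r := by
    apply hH.congr_of_eventuallyEq
    filter_upwards [Ioi_mem_nhds hr0] with x hx
    exact keyeq x hx
  refine ⟨hu₀pos, hu₀', hG.differentiableAt, ?_⟩
  rw [hG.deriv]
  -- rewrite the last term
  have habsm : |deriv u₀ r| ^ (m - 1) = α ^ (m - 1) * r ^ β := by
    rw [hderiv' r hr0, abs_neg, abs_of_pos (mul_pos hα0 hrα1),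
      Real.mul_rpow hα0.le hrα1.le, ← Real.rpow_mul hr0.le]
  rw [habsm]
  have hxy : r ^ β = r ^ (β - 1) * r := by
    nth_rewrite 1 [show β = β - 1 + 1 by ring]
    rw [Real.rpow_add_one hr0.ne']
  have hy : 0 < r ^ (β - 1) := Real.rpow_pos_of_pos hr0 _
  have hαm : 0 < α ^ (m - 1) := Real.rpow_pos_of_pos hα0 _
  have hxpos : 0 < r ^ β := Real.rpow_pos_of_pos hr0 _
  have key : S r * r ^ β ≤ deriv S r * r ^ β + S r * (β * r ^ (β - 1)) := by
    have h1 : S r * r ^ β ≤ S r * (β * r ^ (β - 1)) := by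
      rw [hxy]; nlinarith [mul_pos hSpos hy]
    nlinarith [mul_nonneg hSder hxpos.le]
  nlinarith [mul_le_mul_of_nonneg_left key hαm.le]
end

section
/- (Radial supersolution near infinity for exponential weight, region G_4; proof of Theorem 1.5 (D)) Let m > 1, p < 0, q = m − 1, λ > 0, and fix η with 0 < η < 1. Define S(r) = e^{λ r} and u(r) = λ^{1/p} + r^{−η} for r > 0. Then there exists R₀ > 0 such that for all r ≥ R₀, the radial inequality (S·|u'|^{m−2}·u')'(r) + S(r)·u(r)^p·|u'(r)|^{m−1} ≤ 0 holds. -/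
open MeasureTheory Real Filter

private lemma rpow_add_mvt_bound (a ε p : ℝ) (ha : 0 < a) (hε : 0 < ε) (hεa : ε ≤ a)
    (hp : p < 0) : (a + ε) ^ p ≤ a ^ p + p * (2 * a) ^ (p - 1) * ε := by
  obtain ⟨ξ, hξ, hslope⟩ := exists_hasDerivAt_eq_slope (fun x : ℝ => x ^ p)
    (fun x => p * x ^ (p - 1)) (by linarith : a < a + ε)
    (by
      intro x hx
      have hx0 : 0 < x := lt_of_lt_of_le ha hx.1
      exact ((Real.hasDerivAt_rpow_const (Or.inl hx0.ne')).continuousAt).continuousWithinAt)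
    (fun x hx => Real.hasDerivAt_rpow_const (Or.inl (lt_of_lt_of_le ha hx.1.le).ne'))
  have hξ0 : 0 < ξ := lt_trans ha hξ.1
  have hξ2a : ξ ≤ 2 * a := by linarith [hξ.2]
  have hbase : (2 * a) ^ (p - 1) ≤ ξ ^ (p - 1) :=
    Real.rpow_le_rpow_of_nonpos hξ0 hξ2a (by linarith)
  have hderiv_le : p * ξ ^ (p - 1) ≤ p * (2 * a) ^ (p - 1) :=
    mul_le_mul_of_nonpos_left hbase hp.le
  have heq : (a + ε) ^ p - a ^ p = p * ξ ^ (p - 1) * ε := by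
    have := hslope
    rw [add_sub_cancel_left, eq_div_iff hε.ne'] at this
    linarith [this]
  nlinarith [mul_le_mul_of_nonneg_right hderiv_le hε.le]

/-- Radial supersolution near infinity for an exponential weight, region `G₄`
(proof of Theorem 1.5 (D)). -/
theorem radial_supersolution_near_infinity_G4
    (m p q lam η : ℝ)
    (hm : 1 < m) (hp : p < 0) (hq : q = m - 1) (hlam : 0 < lam)
    (hη1 : 0 < η) (hη2 : η < 1)
    (S u : ℝ → ℝ)
    (hS : ∀ r : ℝ, 0 < r → S r = Real.exp (lam * r))
    (hu : ∀ r : ℝ, 0 < r → u r = lam ^ (1 / p) + r ^ (-η)) :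
    ∃ R₀ : ℝ, 0 < R₀ ∧ ∀ r : ℝ, R₀ ≤ r →
      DifferentiableAt ℝ (fun t => S t * |deriv u t| ^ (m - 2) * deriv u t) r ∧
      deriv (fun t => S t * |deriv u t| ^ (m - 2) * deriv u t) r
        + S r * u r ^ p * |deriv u r| ^ (m - 1) ≤ 0 := by
  set a : ℝ := lam ^ (1 / p) with ha_def
  have ha : 0 < a := Real.rpow_pos_of_pos hlam _
  set K : ℝ := -p * (2 * a) ^ (p - 1) with hK_def
  have hK : 0 < K := by
    apply mul_pos (by linarith)
    exact Real.rpow_pos_of_pos (by linarith) _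
  set β : ℝ := (η + 1) * (m - 1) with hβ_def
  have hβ : 0 < β := by nlinarith
  set e : ℝ := (-η - 1) * (m - 1) with he_def
  have heβ : e = -β := by rw [he_def, hβ_def]; ring
  -- derivative of u on (0, ∞)
  have hderivu : ∀ t : ℝ, 0 < t → deriv u t = -(η * t ^ (-η - 1)) := by
    intro t ht
    have hmem : Set.Ioi (0:ℝ) ∈ nhds t := Ioi_mem_nhds ht
    have hequ : u =ᶠ[nhds t] fun s => a + s ^ (-η) :=
      Filter.eventuallyEq_of_mem hmem (fun s hs => hu s hs)
    have hd : HasDerivAt (fun s : ℝ => a + s ^ (-η)) (-η * t ^ (-η - 1)) t :=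
      (Real.hasDerivAt_rpow_const (Or.inl ht.ne')).const_add a
    rw [hequ.deriv_eq, hd.deriv]; ring
  have habs : ∀ t : ℝ, 0 < t → |deriv u t| = η * t ^ (-η - 1) := by
    intro t ht
    rw [hderivu t ht, abs_neg, abs_of_nonneg (by positivity)]
  -- eventual equality of the flux with an explicit function
  have hFeq : ∀ t : ℝ, 0 < t →
      S t * |deriv u t| ^ (m - 2) * deriv u t
        = -(η ^ (m - 1)) * (Real.exp (lam * t) * t ^ e) := by
    intro t ht
    rw [hS t ht, habs t ht, hderivu t ht,
      Real.mul_rpow hη1.le (by positivity), ← Real.rpow_mul ht.le]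
    have h1 : η ^ (m - 1) = η ^ (m - 2) * η := by
      rw [← Real.rpow_add_one hη1.ne']; ring_nf
    have h2 : t ^ e = t ^ ((-η - 1) * (m - 2)) * t ^ (-η - 1) := by
      rw [← Real.rpow_add ht, he_def]; ring_nf
    rw [h1, h2]; ring
  -- the derivative of the explicit function
  have hG : ∀ t : ℝ, 0 < t →
      HasDerivAt (fun s : ℝ => -(η ^ (m - 1)) * (Real.exp (lam * s) * s ^ e))
        (-(η ^ (m - 1)) * (Real.exp (lam * t) * lam * t ^ e
          + Real.exp (lam * t) * (e * t ^ (e - 1)))) t := by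
    intro t ht
    have h1 : HasDerivAt (fun s : ℝ => Real.exp (lam * s)) (Real.exp (lam * t) * lam) t := by
      simpa using ((hasDerivAt_id t).const_mul lam).exp
    have h2 : HasDerivAt (fun s : ℝ => s ^ e) (e * t ^ (e - 1)) t :=
      Real.hasDerivAt_rpow_const (Or.inl ht.ne')
    exact (h1.mul h2).const_mul _
  -- choose R₀
  have hev : ∀ᶠ r : ℝ in atTop, 1 ≤ r ∧ r ^ (-η) ≤ a ∧ β ≤ K * r ^ (1 - η) := by
    have e1 : ∀ᶠ r : ℝ in atTop, (1:ℝ) ≤ r := eventually_ge_atTop 1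
    have e2 : ∀ᶠ r : ℝ in atTop, r ^ (-η) ≤ a := by
      have := (tendsto_rpow_neg_atTop hη1).eventually_lt_const ha
      filter_upwards [this] with r hr using hr.le
    have e3 : ∀ᶠ r : ℝ in atTop, β ≤ K * r ^ (1 - η) := by
      have := ((tendsto_rpow_atTop (by linarith : (0:ℝ) < 1 - η)).const_mul_atTop hK)
      exact this.eventually_ge_atTop β
    filter_upwards [e1, e2, e3] with r h1 h2 h3 using ⟨h1, h2, h3⟩
  obtain ⟨R₁, hR₁⟩ := eventually_atTop.mp hev
  refine ⟨max R₁ 1, lt_of_lt_of_le one_pos (le_max_right _ _), fun r hr => ?_⟩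
  obtain ⟨hr1, hr2, hr3⟩ := hR₁ r (le_trans (le_max_left _ _) hr)
  have ht : 0 < r := lt_of_lt_of_le one_pos (le_trans (le_max_right _ _) hr)
  -- differentiability and deriv value
  have hFG : (fun t => S t * |deriv u t| ^ (m - 2) * deriv u t)
      =ᶠ[nhds r] fun s => -(η ^ (m - 1)) * (Real.exp (lam * s) * s ^ e) :=
    Filter.eventuallyEq_of_mem (Ioi_mem_nhds ht) (fun s hs => hFeq s hs)
  have hDF : HasDerivAt (fun t => S t * |deriv u t| ^ (m - 2) * deriv u t)
      (-(η ^ (m - 1)) * (Real.exp (lam * r) * lam * r ^ e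
        + Real.exp (lam * r) * (e * r ^ (e - 1)))) r :=
    (hG r ht).congr_of_eventuallyEq hFG
  refine ⟨hDF.differentiableAt, ?_⟩
  rw [hDF.deriv]
  -- key inequality : u r ^ p + β / r ≤ lam
  have hap : a ^ p = lam := by
    rw [ha_def, ← Real.rpow_mul hlam.le, one_div_mul_cancel hp.ne, Real.rpow_one]
  have hεpos : 0 < r ^ (-η) := Real.rpow_pos_of_pos ht _
  have hub : u r ^ p ≤ lam - K * r ^ (-η) := by
    rw [hu r ht]
    have := rpow_add_mvt_bound a (r ^ (-η)) p ha hεpos hr2 hp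
    rw [hap] at this
    rw [hK_def]; linarith
  have hKr : β / r ≤ K * r ^ (-η) := by
    rw [div_le_iff₀ ht]
    have hx : r ^ (1 - η) = r ^ (-η) * r := by
      rw [← Real.rpow_add_one ht.ne' (-η)]; ring_nf
    calc β ≤ K * r ^ (1 - η) := hr3
      _ = K * r ^ (-η) * r := by rw [hx]; ring
  have hkey : u r ^ p + β / r ≤ lam := by linarith
  -- conclude
  rw [hS r ht, habs r ht, Real.mul_rpow hη1.le (by positivity), ← Real.rpow_mul ht.le]
  have hre : r ^ (e - 1) = r ^ e / r := by
    rw [Real.rpow_sub ht, Real.rpow_one]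
  have hA : (0:ℝ) < η ^ (m - 1) := Real.rpow_pos_of_pos hη1 _
  have hE : (0:ℝ) < Real.exp (lam * r) := Real.exp_pos _
  have hT : (0:ℝ) < r ^ e := Real.rpow_pos_of_pos ht _
  have hfac : η ^ (m - 1) * Real.exp (lam * r) * r ^ e * (u r ^ p + β / r - lam) ≤ 0 :=
    mul_nonpos_of_nonneg_of_nonpos (by positivity) (by linarith)
  have hgoal : -(η ^ (m - 1)) * (Real.exp (lam * r) * lam * r ^ e
        + Real.exp (lam * r) * (e * r ^ (e - 1)))
      + Real.exp (lam * r) * u r ^ p * (η ^ (m - 1) * r ^ ((-η - 1) * (m - 1)))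
      = η ^ (m - 1) * Real.exp (lam * r) * r ^ e * (u r ^ p + β / r - lam) := by
    rw [hre, ← he_def, heβ]
    field_simp
    ring
  rw [hgoal]
  exact hfac
end

section
/- (Radial supersolution near infinity for superexponential weight, region G_6; proof of Theorem 1.5 (F)) Let m > 1, q < m − 1, p < m − 1 − q, λ > 0, and let γ > 2(m − 1 − q) + 1. Define S(r) = e^{λ·r^γ·ln r} and u(r) = e^{(ln r)/r} for r > 1. Then there exists R₀ > e such that for all r ≥ R₀, u'(r) < 0 and the radial inequality (S·|u'|^{m−2}·u')'(r) + S(r)·u(r)^p·|u'(r)|^q ≤ 0 holds. -/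
open MeasureTheory Real Filter

set_option maxHeartbeats 1000000

noncomputable def G6U (t : ℝ) : ℝ := Real.exp (Real.log t / t)
noncomputable def G6v (t : ℝ) : ℝ := (Real.log t - 1) / t ^ 2
noncomputable def G6vd (t : ℝ) : ℝ := (3 - 2 * Real.log t) / t ^ 3
noncomputable def G6A (lam γ t : ℝ) : ℝ := lam * t ^ (γ - 1) * (γ * Real.log t + 1)

lemma G6U_hasDeriv {t : ℝ} (ht : 0 < t) : HasDerivAt G6U (-(G6U t * G6v t)) t := by
  have h1 : HasDerivAt (fun x : ℝ => Real.log x / x)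
      ((t⁻¹ * t - Real.log t * 1) / t ^ 2) t :=
    (Real.hasDerivAt_log ht.ne').div (hasDerivAt_id t) ht.ne'
  have h2 : HasDerivAt (fun x : ℝ => Real.log x / x) (-((Real.log t - 1) / t ^ 2)) t := by
    convert h1 using 1
    field_simp
    ring
  have h3 := h2.exp
  unfold G6U G6v
  convert h3 using 1
  ring

lemma G6v_hasDeriv {t : ℝ} (ht : 0 < t) : HasDerivAt G6v (G6vd t) t := by
  have h1 := ((Real.hasDerivAt_log ht.ne').sub_const 1).div (hasDerivAt_pow 2 t)
    (by positivity : (t:ℝ)^2 ≠ 0)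
  unfold G6v G6vd
  refine h1.congr_deriv ?_
  field_simp
  ring

lemma G6S_hasDeriv (lam γ : ℝ) {t : ℝ} (ht : 0 < t) :
    HasDerivAt (fun x : ℝ => Real.exp (lam * x ^ γ * Real.log x))
      (Real.exp (lam * t ^ γ * Real.log t) * G6A lam γ t) t := by
  have hrp : HasDerivAt (fun x : ℝ => x ^ γ) (γ * t ^ (γ - 1)) t :=
    Real.hasDerivAt_rpow_const (Or.inl ht.ne')
  have h1 := (hrp.const_mul lam).mul (Real.hasDerivAt_log ht.ne')
  have h2 : HasDerivAt (fun x : ℝ => lam * x ^ γ * Real.log x) (G6A lam γ t) t := by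
    refine h1.congr_deriv ?_
    unfold G6A
    have ht' : t ^ γ * t⁻¹ = t ^ (γ - 1) := by
      rw [Real.rpow_sub ht, Real.rpow_one]; ring
    rw [← ht']
    ring
  exact h2.exp

lemma G6g_hasDeriv {t : ℝ} (ht : 0 < t) :
    HasDerivAt (fun x => G6U x * G6v x) (G6U t * (G6vd t - (G6v t) ^ 2)) t := by
  have := (G6U_hasDeriv ht).mul (G6v_hasDeriv ht)
  refine this.congr_deriv ?_
  ring

lemma G6G_hasDeriv (m lam γ : ℝ) {t : ℝ} (ht : 0 < t) (hgt : 0 < G6U t * G6v t) :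
    HasDerivAt (fun x => Real.exp (lam * x ^ γ * Real.log x) * (G6U x * G6v x) ^ (m - 1))
      (Real.exp (lam * t ^ γ * Real.log t) * G6A lam γ t * (G6U t * G6v t) ^ (m - 1)
        + Real.exp (lam * t ^ γ * Real.log t) *
          ((G6U t * (G6vd t - (G6v t) ^ 2)) * (m - 1) * (G6U t * G6v t) ^ (m - 2))) t := by
  have h1 := (G6S_hasDeriv lam γ ht).mul ((G6g_hasDeriv ht).rpow_const (p := m - 1) (Or.inl hgt.ne'))
  refine h1.congr_deriv ?_
  rw [show m - 1 - 1 = m - 2 by ring]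

section
variable {r : ℝ}

lemma G6core (m p q lam γ : ℝ) (r : ℝ)
    (hm : 1 < m) (hq : q < m - 1) (hp : p < m - 1 - q) (hlam : 0 < lam)
    (hγ : 2 * (m - 1 - q) + 1 < γ)
    (hr3 : Real.exp 3 ≤ r)
    (hC1 : 3 * Real.exp 1 * (m - 1) ≤ lam * γ / 4 * (r ^ γ * Real.log r))
    (hC2 : Real.exp |p| ≤ lam * γ * (2:ℝ) ^ (-(m - 1 - q)) / 2 * r ^ (γ - 1 - 2 * (m - 1 - q))) :
    G6U r ^ p * (G6U r * G6v r) ^ q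
      ≤ G6A lam γ r * (G6U r * G6v r) ^ (m - 1)
        + (m - 1) * (G6U r * G6v r) ^ (m - 2) * (G6U r * (G6vd r - (G6v r) ^ 2)) := by
  have hm1 : (0:ℝ) < m - 1 := by linarith
  have hs : (0:ℝ) < m - 1 - q := by linarith
  have hγ0 : (0:ℝ) < γ := by linarith
  have hr0 : (0:ℝ) < r := lt_of_lt_of_le (Real.exp_pos 3) hr3
  have hL3 : (3:ℝ) ≤ Real.log r := by
    rw [← Real.log_exp 3]; exact Real.log_le_log (Real.exp_pos 3) hr3
  have hL0 : (0:ℝ) < Real.log r := by linarith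
  have hLr : Real.log r ≤ r := by nlinarith [Real.log_le_sub_one_of_pos hr0]
  set L := Real.log r with hLdef
  have hUr1 : (1:ℝ) ≤ G6U r :=
    Real.one_le_exp (div_nonneg (by positivity) hr0.le)
  have hUre : G6U r ≤ Real.exp 1 := by
    unfold G6U
    rw [← hLdef]
    exact Real.exp_le_exp.mpr ((div_le_one hr0).mpr hLr)
  have hvr : (0:ℝ) < G6v r := by
    unfold G6v; rw [← hLdef]
    exact div_pos (by linarith) (by positivity)
  have hU0 : (0:ℝ) < G6U r := lt_of_lt_of_le one_pos hUr1
  have hg : (0:ℝ) < G6U r * G6v r := mul_pos hU0 hvr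
  set U := G6U r with hUdef
  set g := G6U r * G6v r with hgdef
  set A := G6A lam γ r with hAdef
  set gd := G6U r * (G6vd r - (G6v r) ^ 2) with hgddef
  have hX : (0:ℝ) < r ^ (γ - 1) := Real.rpow_pos_of_pos hr0 _
  have hApos : (0:ℝ) < A := by
    rw [hAdef]; unfold G6A; rw [← hLdef]
    have h1 : (0:ℝ) < γ * L + 1 := by nlinarith
    positivity
  have hG1 : (0:ℝ) < g ^ (m - 2) := Real.rpow_pos_of_pos hg _
  have hQ : (0:ℝ) < g ^ q := Real.rpow_pos_of_pos hg _
  have hGs : (0:ℝ) < g ^ (m - 1 - q) := Real.rpow_pos_of_pos hg _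
  have id1 : g ^ (m - 1) = g ^ (m - 2) * g := by
    rw [← Real.rpow_add_one hg.ne', show m - 2 + 1 = m - 1 by ring]
  have id2 : g ^ (m - 1) = g ^ (m - 1 - q) * g ^ q := by
    rw [← Real.rpow_add hg, show m - 1 - q + q = m - 1 by ring]
  have hA_lb : lam * γ * r ^ (γ - 1) * L ≤ A := by
    rw [hAdef]; unfold G6A; rw [← hLdef]
    nlinarith [mul_pos hlam hX]
  have hv_lb : L / (2 * r ^ 2) ≤ G6v r := by
    unfold G6v
    rw [← hLdef, div_le_div_iff₀ (by positivity) (by positivity)]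
    nlinarith [mul_nonneg (by linarith : (0:ℝ) ≤ L - 2) (sq_nonneg r)]
  have hg_lb : L / (2 * r ^ 2) ≤ g := by
    rw [hgdef]
    calc L / (2 * r ^ 2) ≤ G6v r := hv_lb
      _ = 1 * G6v r := (one_mul _).symm
      _ ≤ G6U r * G6v r := mul_le_mul_of_nonneg_right hUr1 hvr.le
  have hgd_lb : -(3 * Real.exp 1 * L / r ^ 3) ≤ gd := by
    have key : (0:ℝ) ≤ U * (3 - 2 * L) * r - U * (L - 1) ^ 2 + 3 * Real.exp 1 * L * r := by
      nlinarith [mul_nonneg (mul_nonneg (sub_nonneg.mpr hUre) (by linarith : (0:ℝ) ≤ 2 * L - 3)) hr0.le,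
        mul_nonneg (Real.exp_pos 1).le (by nlinarith : (0:ℝ) ≤ L * r - (L - 1) ^ 2),
        mul_pos (Real.exp_pos 1) hr0]
    have heq2 : gd + 3 * Real.exp 1 * L / r ^ 3
        = (U * (3 - 2 * L) * r - U * (L - 1) ^ 2 + 3 * Real.exp 1 * L * r) / r ^ 4 := by
      rw [hgddef, ← hUdef]; unfold G6vd G6v
      rw [← hLdef]
      field_simp
    have h5 := div_nonneg key (by positivity : (0:ℝ) ≤ r ^ 4)
    rw [← heq2] at h5
    linarith
  have hrgam : r ^ γ = r ^ (γ - 1) * r := by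
    rw [← Real.rpow_add_one hr0.ne', show γ - 1 + 1 = γ by ring]
  have I1' : (m - 1) * (3 * Real.exp 1 * L / r ^ 3) ≤ 1 / 2 * A * g := by
    have h1 : 3 * Real.exp 1 * (m - 1) * (L / r ^ 3)
        ≤ lam * γ / 4 * (r ^ γ * L) * (L / r ^ 3) :=
      mul_le_mul_of_nonneg_right hC1 (by positivity)
    have h2 : lam * γ / 4 * (r ^ γ * L) * (L / r ^ 3)
        = 1 / 2 * (lam * γ * r ^ (γ - 1) * L * (L / (2 * r ^ 2))) := by
      rw [hrgam]; field_simp; ring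
    have h3 : lam * γ * r ^ (γ - 1) * L * (L / (2 * r ^ 2)) ≤ A * g := by
      apply mul_le_mul hA_lb hg_lb (by positivity) hApos.le
    have h4 : (m - 1) * (3 * Real.exp 1 * L / r ^ 3)
        = 3 * Real.exp 1 * (m - 1) * (L / r ^ 3) := by ring
    rw [h2] at h1
    rw [h4]
    linarith [h1, h3]
  have I1 : (m - 1) * (-gd) ≤ 1 / 2 * A * g := by
    have h6 : -gd ≤ 3 * Real.exp 1 * L / r ^ 3 := by linarith
    have h7 := mul_le_mul_of_nonneg_left h6 hm1.le
    linarith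
  have hbase : (1:ℝ) / (2 * r ^ 2) ≤ g := by
    have h1 : (1:ℝ) / (2 * r ^ 2) ≤ L / (2 * r ^ 2) := by gcongr; linarith
    linarith
  have h2r : (0:ℝ) < 2 * r ^ 2 := by positivity
  have e2 : ((2:ℝ) * r ^ 2) ^ (m - 1 - q) = 2 ^ (m - 1 - q) * r ^ (2 * (m - 1 - q)) := by
    rw [Real.mul_rpow (by norm_num) (by positivity), ← Real.rpow_natCast r 2,
      ← Real.rpow_mul hr0.le]
    norm_num
  have hs2 : ((1:ℝ) / (2 * r ^ 2)) ^ (m - 1 - q)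
      = (2:ℝ) ^ (-(m - 1 - q)) * r ^ (-(2 * (m - 1 - q))) := by
    rw [one_div, Real.inv_rpow h2r.le, e2, Real.rpow_neg (by norm_num : (0:ℝ) ≤ 2),
      Real.rpow_neg hr0.le, mul_inv]
  have hGs_lb : (2:ℝ) ^ (-(m - 1 - q)) * r ^ (-(2 * (m - 1 - q))) ≤ g ^ (m - 1 - q) := by
    rw [← hs2]
    exact Real.rpow_le_rpow (by positivity) hbase hs.le
  have hXid : r ^ (γ - 1) * r ^ (-(2 * (m - 1 - q))) = r ^ (γ - 1 - 2 * (m - 1 - q)) := by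
    rw [← Real.rpow_add hr0, show γ - 1 + -(2 * (m - 1 - q)) = γ - 1 - 2 * (m - 1 - q) by ring]
  have h2s : (0:ℝ) < (2:ℝ) ^ (-(m - 1 - q)) := Real.rpow_pos_of_pos (by norm_num) _
  have h9 : lam * γ * (2:ℝ) ^ (-(m - 1 - q)) * r ^ (γ - 1 - 2 * (m - 1 - q))
      ≤ A * g ^ (m - 1 - q) := by
    have hA1 : lam * γ * r ^ (γ - 1) ≤ A := by nlinarith [mul_pos (mul_pos hlam hγ0) hX]
    have step1 : lam * γ * r ^ (γ - 1) * ((2:ℝ) ^ (-(m - 1 - q)) * r ^ (-(2 * (m - 1 - q))))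
        ≤ lam * γ * r ^ (γ - 1) * (g ^ (m - 1 - q)) :=
      mul_le_mul_of_nonneg_left hGs_lb (by positivity)
    have step2 : lam * γ * r ^ (γ - 1) * (g ^ (m - 1 - q)) ≤ A * g ^ (m - 1 - q) :=
      mul_le_mul_of_nonneg_right hA1 hGs.le
    have step0 : lam * γ * (2:ℝ) ^ (-(m - 1 - q)) * r ^ (γ - 1 - 2 * (m - 1 - q))
        = lam * γ * r ^ (γ - 1) * ((2:ℝ) ^ (-(m - 1 - q)) * r ^ (-(2 * (m - 1 - q)))) := by
      rw [← hXid]; ring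
    rw [step0]
    exact le_trans step1 step2
  have hUp : U ^ p ≤ Real.exp |p| := by
    rcases le_or_gt 0 p with hp0 | hp0
    · calc U ^ p ≤ (Real.exp 1) ^ p :=
          Real.rpow_le_rpow (by positivity) hUre hp0
        _ = Real.exp p := by rw [← Real.exp_mul, one_mul]
        _ ≤ Real.exp |p| := Real.exp_le_exp.mpr (le_abs_self p)
    · calc U ^ p ≤ 1 := Real.rpow_le_one_of_one_le_of_nonpos hUr1 hp0.le
        _ ≤ Real.exp |p| := Real.one_le_exp (abs_nonneg p)
  have I2' : U ^ p ≤ 1 / 2 * A * g ^ (m - 1 - q) := by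
    calc U ^ p ≤ Real.exp |p| := hUp
      _ ≤ lam * γ * (2:ℝ) ^ (-(m - 1 - q)) / 2 * r ^ (γ - 1 - 2 * (m - 1 - q)) := hC2
      _ ≤ 1 / 2 * A * g ^ (m - 1 - q) := by linarith
  have e1 : U ^ p * g ^ q ≤ 1 / 2 * A * g ^ (m - 1) := by
    have h10 := mul_le_mul_of_nonneg_right I2' hQ.le
    calc U ^ p * g ^ q ≤ 1 / 2 * A * g ^ (m - 1 - q) * g ^ q := h10
      _ = 1 / 2 * A * (g ^ (m - 1 - q) * g ^ q) := by ring
      _ = 1 / 2 * A * g ^ (m - 1) := by rw [← id2]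
  have e2 : (m - 1) * g ^ (m - 2) * (-gd) ≤ 1 / 2 * A * g ^ (m - 1) := by
    have h11 := mul_le_mul_of_nonneg_right I1 hG1.le
    calc (m - 1) * g ^ (m - 2) * (-gd) = (m - 1) * (-gd) * g ^ (m - 2) := by ring
      _ ≤ 1 / 2 * A * g * g ^ (m - 2) := h11
      _ = 1 / 2 * A * (g ^ (m - 2) * g) := by ring
      _ = 1 / 2 * A * g ^ (m - 1) := by rw [← id1]
  linarith
end

lemma G6_pointwise (m p q lam γ : ℝ)
    (hm : 1 < m) (hq : q < m - 1) (hp : p < m - 1 - q) (hlam : 0 < lam)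
    (hγ : 2 * (m - 1 - q) + 1 < γ)
    (S u : ℝ → ℝ)
    (hS : ∀ r : ℝ, 1 < r → S r = Real.exp (lam * r ^ γ * Real.log r))
    (hu : ∀ r : ℝ, 1 < r → u r = Real.exp (Real.log r / r))
    (r : ℝ) (hr3 : Real.exp 3 ≤ r)
    (hC1 : 3 * Real.exp 1 * (m - 1) ≤ lam * γ / 4 * (r ^ γ * Real.log r))
    (hC2 : Real.exp |p| ≤ lam * γ * (2:ℝ) ^ (-(m - 1 - q)) / 2 * r ^ (γ - 1 - 2 * (m - 1 - q))) :
    deriv u r < 0 ∧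
      DifferentiableAt ℝ (fun t => S t * |deriv u t| ^ (m - 2) * deriv u t) r ∧
      deriv (fun t => S t * |deriv u t| ^ (m - 2) * deriv u t) r
        + S r * u r ^ p * |deriv u r| ^ q ≤ 0 := by
  have hr0 : (0:ℝ) < r := lt_of_lt_of_le (Real.exp_pos 3) hr3
  have h1e : (1:ℝ) < Real.exp 1 := Real.one_lt_exp_iff.mpr one_pos
  have h13 : Real.exp 1 < Real.exp 3 := Real.exp_lt_exp.mpr (by norm_num)
  have hre : Real.exp 1 < r := lt_of_lt_of_le h13 hr3
  have hr1 : (1:ℝ) < r := lt_trans h1e hre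
  have hL3 : (3:ℝ) ≤ Real.log r := by
    rw [← Real.log_exp 3]; exact Real.log_le_log (Real.exp_pos 3) hr3
  have hud : ∀ t : ℝ, 1 < t → deriv u t = -(G6U t * G6v t) := by
    intro t ht
    have ht0 : (0:ℝ) < t := lt_trans one_pos ht
    have heq : u =ᶠ[nhds t] G6U := by
      filter_upwards [isOpen_Ioi.mem_nhds ht] with x hx
      exact hu x hx
    rw [heq.deriv_eq, (G6U_hasDeriv ht0).deriv]
  have hvr : (0:ℝ) < G6v r := div_pos (by linarith) (by positivity)
  have hU0 : (0:ℝ) < G6U r := Real.exp_pos _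
  have hg : (0:ℝ) < G6U r * G6v r := mul_pos hU0 hvr
  have part1 : deriv u r < 0 := by
    rw [hud r hr1]; linarith
  have hFG : (fun t => S t * |deriv u t| ^ (m - 2) * deriv u t)
      =ᶠ[nhds r] (fun t => -(Real.exp (lam * t ^ γ * Real.log t) * (G6U t * G6v t) ^ (m - 1))) := by
    filter_upwards [isOpen_Ioi.mem_nhds hre] with t ht
    have ht1 : (1:ℝ) < t := lt_trans h1e ht
    have ht0 : (0:ℝ) < t := lt_trans one_pos ht1
    have hlt : (1:ℝ) < Real.log t := by
      rw [← Real.log_exp 1]; exact Real.log_lt_log (Real.exp_pos 1) ht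
    have hvt : (0:ℝ) < G6v t := div_pos (by linarith) (by positivity)
    have hgt : (0:ℝ) < G6U t * G6v t := mul_pos (Real.exp_pos _) hvt
    rw [hud t ht1, hS t ht1, abs_neg, abs_of_pos hgt]
    have hpow : (G6U t * G6v t) ^ (m - 2) * (G6U t * G6v t) = (G6U t * G6v t) ^ (m - 1) := by
      rw [← Real.rpow_add_one hgt.ne', show m - 2 + 1 = m - 1 by ring]
    calc Real.exp (lam * t ^ γ * Real.log t) * (G6U t * G6v t) ^ (m - 2) * (-(G6U t * G6v t))
        = -(Real.exp (lam * t ^ γ * Real.log t)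
            * ((G6U t * G6v t) ^ (m - 2) * (G6U t * G6v t))) := by ring
      _ = -(Real.exp (lam * t ^ γ * Real.log t) * (G6U t * G6v t) ^ (m - 1)) := by rw [hpow]
  have hG := G6G_hasDeriv m lam γ hr0 hg
  have hF := (hG.neg).congr_of_eventuallyEq hFG
  refine ⟨part1, hF.differentiableAt, ?_⟩
  rw [hF.deriv, hud r hr1, hS r hr1, hu r hr1, abs_neg, abs_of_pos hg]
  have core := G6core m p q lam γ r hm hq hp hlam hγ hr3 hC1 hC2
  have hSpos : (0:ℝ) < Real.exp (lam * r ^ γ * Real.log r) := Real.exp_pos _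
  have final := mul_le_mul_of_nonneg_left core hSpos.le
  have hurw : Real.exp (Real.log r / r) = G6U r := rfl
  rw [hurw]
  nlinarith [final]

/-- Radial supersolution near infinity for a superexponential weight,
region `G₆` (proof of Theorem 1.5 (F)). -/
theorem radial_supersolution_near_infinity_G6
    (m p q lam γ : ℝ)
    (hm : 1 < m) (hq : q < m - 1) (hp : p < m - 1 - q) (hlam : 0 < lam)
    (hγ : 2 * (m - 1 - q) + 1 < γ)
    (S u : ℝ → ℝ)
    (hS : ∀ r : ℝ, 1 < r → S r = Real.exp (lam * r ^ γ * Real.log r))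
    (hu : ∀ r : ℝ, 1 < r → u r = Real.exp (Real.log r / r)) :
    ∃ R₀ : ℝ, Real.exp 1 < R₀ ∧ ∀ r : ℝ, R₀ ≤ r →
      deriv u r < 0 ∧
      DifferentiableAt ℝ (fun t => S t * |deriv u t| ^ (m - 2) * deriv u t) r ∧
      deriv (fun t => S t * |deriv u t| ^ (m - 2) * deriv u t) r
        + S r * u r ^ p * |deriv u r| ^ q ≤ 0 := by
  have hs : (0:ℝ) < m - 1 - q := by linarith
  have hε : (0:ℝ) < γ - 1 - 2 * (m - 1 - q) := by linarith
  have hγ0 : (0:ℝ) < γ := by linarith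
  have T1 : Tendsto (fun r : ℝ => lam * γ / 4 * (r ^ γ * Real.log r)) atTop atTop := by
    apply Tendsto.const_mul_atTop (by positivity)
    exact (tendsto_rpow_atTop hγ0).atTop_mul_atTop₀ Real.tendsto_log_atTop
  have h2s : (0:ℝ) < (2:ℝ) ^ (-(m - 1 - q)) := Real.rpow_pos_of_pos (by norm_num) _
  have T2 : Tendsto (fun r : ℝ => lam * γ * (2:ℝ) ^ (-(m - 1 - q)) / 2
      * r ^ (γ - 1 - 2 * (m - 1 - q))) atTop atTop := by
    apply Tendsto.const_mul_atTop (by positivity)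
    exact tendsto_rpow_atTop hε
  have E : ∀ᶠ r : ℝ in atTop,
      Real.exp 3 ≤ r ∧
      3 * Real.exp 1 * (m - 1) ≤ lam * γ / 4 * (r ^ γ * Real.log r) ∧
      Real.exp |p| ≤ lam * γ * (2:ℝ) ^ (-(m - 1 - q)) / 2
        * r ^ (γ - 1 - 2 * (m - 1 - q)) :=
    (eventually_ge_atTop _).and ((T1.eventually_ge_atTop _).and (T2.eventually_ge_atTop _))
  obtain ⟨R₁, hR₁⟩ := eventually_atTop.mp E
  refine ⟨max R₁ (Real.exp 3), ?_, ?_⟩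
  · calc Real.exp 1 < Real.exp 3 := Real.exp_lt_exp.mpr (by norm_num)
      _ ≤ _ := le_max_right _ _
  · intro r hr
    obtain ⟨hr3, hC1, hC2⟩ := hR₁ r (le_trans (le_max_left _ _) hr)
    exact G6_pointwise m p q lam γ hm hq hp hlam hγ S u hS hu r hr3 hC1 hC2
end
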